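/- arXiv:2112.12075 — 5 statements merged into one kernel-verified Lean document; each statement's English description precedes it below -/
import Mathlib

section
/- Let α, a, x, y, z, t ∈ ℂ and r̃, s̃ ∈ ℤ with r̃ > s̃ and |xt| < 1. Then the series ∑_{n=0}^∞ L̃_n^{(r̃,s̃)}(α,x,y,z,a) · t^n/(q;q)_n converges absolutely and its sum equals ((yt;q)_∞/(xt;q)_∞) · ∑_{k=0}^∞ ((−q^{−α};q)_k (a;q)_k/(q²;q²)_k) · q^{kα + r̃·C(k,2) − s̃·C(k+1,2)} (zt)^k, the series over k also converging absolutely. -/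
noncomputable section

/-- The q-shifted factorial `(a;q)_n`. -/
def qPoch (q a : ℂ) (n : ℕ) : ℂ := ∏ j ∈ Finset.range n, (1 - a * q ^ j)

/-- The infinite q-shifted factorial `(a;q)_∞`. -/
def qPochInf (q a : ℂ) : ℂ := ∏' j : ℕ, (1 - a * q ^ j)

/-- The q-binomial coefficient `[n k]_q`. -/
def qBinom (q : ℂ) (n k : ℕ) : ℂ := qPoch q q n / (qPoch q q k * qPoch q q (n - k))

/-- The Cauchy polynomials `p_n(x,y)`. -/
def cauchyP (q x y : ℂ) (n : ℕ) : ℂ := ∏ j ∈ Finset.range n, (x - q ^ j * y)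

/-- The generalized q-binomial coefficient `[α k]_{-q}`. -/
def genQBinom (q α : ℂ) (k : ℕ) : ℂ :=
  qPoch q (-(q ^ (-α))) k / qPoch q (-q) k * q ^ (α * (k : ℂ) - (k.choose 2 : ℂ))

/-- The generalized q-polynomials `L̃_n^{(r,s)}(α,x,y,z,a)`. -/
def Ltil (q : ℂ) (r s : ℤ) (α x y z a : ℂ) (n : ℕ) : ℂ :=
  ∑ k ∈ Finset.range (n + 1),
    qBinom q n k * genQBinom q α k *
      q ^ (r * (k.choose 2 : ℤ) - s * ((k + 1).choose 2 : ℤ) + (k.choose 2 : ℤ)) *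
      qPoch q a k * cauchyP q x y (n - k) * z ^ k

/-- The basic hypergeometric series `₂Φ₁[a,b;c;q;z]`. -/
def Phi21 (q a b c z : ℂ) : ℂ :=
  ∑' n : ℕ, qPoch q a n * qPoch q b n / (qPoch q c n * qPoch q q n) * z ^ n

/-- The basic hypergeometric series `₄Φ₃`. -/
def Phi43 (q a₁ a₂ a₃ a₄ b₁ b₂ b₃ z : ℂ) : ℂ :=
  ∑' n : ℕ, qPoch q a₁ n * qPoch q a₂ n * qPoch q a₃ n * qPoch q a₄ n /
    (qPoch q b₁ n * qPoch q b₂ n * qPoch q b₃ n * qPoch q q n) * z ^ n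

/-- The trivariate q-polynomials `F_n(x,y,z;q)`. -/
def Ftri (q x y z : ℂ) (n : ℕ) : ℂ :=
  (-1) ^ n * q ^ (-(n.choose 2 : ℤ)) *
    ∑ k ∈ Finset.range (n + 1),
      qBinom q n k * q ^ (k.choose 2) * (-z) ^ k * cauchyP q y x (n - k)

/-- The Hahn (Al-Salam–Carlitz) polynomials `φ_n^{(σ)}(x|q)`. -/
def hahnPhi (q σ x : ℂ) (n : ℕ) : ℂ :=
  ∑ k ∈ Finset.range (n + 1), qBinom q n k * qPoch q σ k * x ^ k

/-- The q-derivative operator `D_a`. -/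
def Dq (q : ℂ) (f : ℂ → ℂ) : ℂ → ℂ := fun a => (f a - f (q * a)) / a

/-- The homogeneous q-difference operator `D_{xy}`. -/
def Dxy (q : ℂ) (f : ℂ → ℂ → ℂ) : ℂ → ℂ → ℂ :=
  fun x y => (f x (y / q) - f (q * x) y) / (x - y / q)



open Complex Filter

/-! ### Auxiliary definitions -/

/-- The `k`-th term of the series on the right-hand side. -/
def Aterm (q α a z t : ℂ) (r s : ℤ) (k : ℕ) : ℂ :=
  qPoch q (-(q ^ (-α))) k * qPoch q a k / qPoch (q ^ 2) (q ^ 2) k *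
    (q ^ ((k : ℂ) * α) * q ^ (r * (k.choose 2 : ℤ) - s * ((k + 1).choose 2 : ℤ))) * (z * t) ^ k

/-- The `m`-th term of the Cauchy q-binomial series. -/
def Bterm (q x y u : ℂ) (m : ℕ) : ℂ := cauchyP q x y m * u ^ m / qPoch q q m

/-! ### Basic lemmas -/

lemma one_sub_ne {w : ℂ} (h : ‖w‖ < 1) : (1 : ℂ) - w ≠ 0 := by
  intro h0
  rw [sub_eq_zero] at h0
  rw [← h0] at h
  simp at h

lemma qPoch_succ (q a : ℂ) (n : ℕ) : qPoch q a (n+1) = qPoch q a n * (1 - a * q ^ n) :=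
  Finset.prod_range_succ _ _

lemma cauchyP_succ (q x y : ℂ) (n : ℕ) : cauchyP q x y (n+1) = cauchyP q x y n * (x - q ^ n * y) :=
  Finset.prod_range_succ _ _

lemma norm_q_pow_le {q : ℂ} (hq1 : ‖q‖ < 1) (j : ℕ) : ‖q ^ j‖ ≤ 1 := by
  rw [norm_pow]; exact pow_le_one₀ (norm_nonneg q) hq1.le

lemma qq_ne {q : ℂ} (hq1 : ‖q‖ < 1) (n : ℕ) : qPoch q q n ≠ 0 := by
  apply Finset.prod_ne_zero_iff.mpr
  intro j mem
  apply one_sub_ne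
  rw [norm_mul]
  exact lt_of_le_of_lt (mul_le_of_le_one_right (norm_nonneg q) (norm_q_pow_le hq1 j)) hq1

lemma qmq_ne {q : ℂ} (hq1 : ‖q‖ < 1) (n : ℕ) : qPoch q (-q) n ≠ 0 := by
  apply Finset.prod_ne_zero_iff.mpr
  intro j mem
  apply one_sub_ne
  rw [norm_mul, norm_neg]
  exact lt_of_le_of_lt (mul_le_of_le_one_right (norm_nonneg q) (norm_q_pow_le hq1 j)) hq1

lemma q2_ne {q : ℂ} (hq1 : ‖q‖ < 1) (n : ℕ) : qPoch (q^2) (q^2) n ≠ 0 := by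
  have h2 : ‖q^2‖ < 1 := by
    rw [norm_pow]
    exact lt_of_le_of_lt (pow_le_pow_of_le_one (norm_nonneg q) hq1.le one_le_two)
      (by simpa using hq1)
  exact qq_ne h2 n

lemma dq_ne {q : ℂ} (hq1 : ‖q‖ < 1) (m : ℕ) : (1 : ℂ) - q * q ^ m ≠ 0 := by
  apply one_sub_ne
  rw [norm_mul, norm_pow]
  exact lt_of_le_of_lt (mul_le_of_le_one_right (norm_nonneg q)
    (pow_le_one₀ (norm_nonneg q) hq1.le)) hq1

lemma qPoch_mul_qPoch {q : ℂ} (n : ℕ) :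
    qPoch q q n * qPoch q (-q) n = qPoch (q^2) (q^2) n := by
  unfold qPoch
  rw [← Finset.prod_mul_distrib]
  apply Finset.prod_congr rfl
  intro j mem
  ring

lemma choose2_succ (k : ℕ) : (k+1).choose 2 = k.choose 2 + k := by
  rw [Nat.choose_succ_succ, Nat.choose_one_right]; exact Nat.add_comm _ _

lemma tendsto_cq (q c : ℂ) (hq1 : ‖q‖ < 1) :
    Tendsto (fun j : ℕ => c * q ^ j) atTop (nhds 0) := by
  simpa using (tendsto_pow_atTop_nhds_zero_of_norm_lt_one hq1).const_mul c

/-! ### The term identity -/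

lemma term_eq {q : ℂ} (hq0 : q ≠ 0) (hq1 : ‖q‖ < 1) (α a x y z t : ℂ) (r s : ℤ)
    {k n : ℕ} (hk : k ≤ n) :
    qBinom q n k * genQBinom q α k *
      q ^ (r * (k.choose 2 : ℤ) - s * ((k + 1).choose 2 : ℤ) + (k.choose 2 : ℤ)) *
      qPoch q a k * cauchyP q x y (n - k) * z ^ k * t ^ n / qPoch q q n
    = Aterm q α a z t r s k * Bterm q x y t (n - k) := by
  have e3 : q ^ (α * (k:ℂ) - (k.choose 2 : ℂ)) * q ^ (r * (k.choose 2:ℤ) - s * ((k+1).choose 2:ℤ) + (k.choose 2:ℤ))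
      = q ^ ((k:ℂ) * α) * q ^ (r * (k.choose 2:ℤ) - s * ((k+1).choose 2:ℤ)) := by
    rw [← Complex.cpow_intCast q (r * (k.choose 2:ℤ) - s * ((k+1).choose 2:ℤ) + (k.choose 2:ℤ)),
        ← Complex.cpow_intCast q (r * (k.choose 2:ℤ) - s * ((k+1).choose 2:ℤ)),
        ← Complex.cpow_add _ _ hq0, ← Complex.cpow_add _ _ hq0]
    congr 1
    push_cast
    ring
  have ht : t ^ n = t ^ k * t ^ (n - k) := by rw [← pow_add, Nat.add_sub_cancel' hk]
  unfold Aterm Bterm qBinom genQBinom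
  rw [← qPoch_mul_qPoch, ht]
  field_simp [qq_ne hq1, qmq_ne hq1]
  rw [mul_comm α (k:ℂ)] at e3 ⊢
  linear_combination (qPoch q (-(q ^ (-α))) k * qPoch q a k * cauchyP q x y (n-k) * z^k * t^k * t^(n-k)) * e3

/-! ### Summability of the A series -/

lemma summable_A {q : ℂ} (hq0 : q ≠ 0) (hq1 : ‖q‖ < 1) (α a z t : ℂ) (r s : ℤ)
    (hrs : s < r) :
    Summable (fun k : ℕ => ‖Aterm q α a z t r s k‖) := by
  have hq2 : ‖q ^ 2‖ < 1 := by
    rw [norm_pow]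
    exact lt_of_le_of_lt (pow_le_pow_of_le_one (norm_nonneg q) hq1.le one_le_two)
      (by simpa using hq1)
  have hd2 : ∀ k : ℕ, (1 : ℂ) - q ^ 2 * (q ^ 2) ^ k ≠ 0 := by
    intro k
    apply one_sub_ne
    have h : q ^ 2 * (q ^ 2) ^ k = (q ^ 2) ^ (k + 1) := (pow_succ' _ _).symm
    rw [h, norm_pow]
    exact pow_lt_one₀ (norm_nonneg _) hq2 (Nat.succ_ne_zero _)
  set Φ : ℕ → ℂ := fun k =>
    (1 - (-(q ^ (-α))) * q ^ k) * (1 - a * q ^ k) / (1 - q ^ 2 * (q ^ 2) ^ k) *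
      (q ^ α * q ^ (r * (k:ℤ) - s * ((k:ℤ) + 1))) * (z * t) with hΦ
  have hrec : ∀ k : ℕ, Aterm q α a z t r s (k+1) = Aterm q α a z t r s k * Φ k := by
    intro k
    have hc : q ^ (((k+1 : ℕ) : ℂ) * α) = q ^ ((k:ℂ) * α) * q ^ α := by
      rw [← Complex.cpow_add _ _ hq0]; congr 1; push_cast; ring
    have hz : q ^ (r * (((k+1).choose 2 : ℕ) : ℤ) - s * (((k+1+1).choose 2 : ℕ) : ℤ))
        = q ^ (r * ((k.choose 2 : ℕ) : ℤ) - s * (((k+1).choose 2 : ℕ) : ℤ))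
          * q ^ (r * (k:ℤ) - s * ((k:ℤ) + 1)) := by
      rw [← zpow_add₀ hq0]; congr 1
      simp only [choose2_succ]
      push_cast; ring
    unfold Aterm
    rw [qPoch_succ, qPoch_succ, qPoch_succ, pow_succ, hc, hz, hΦ]
    field_simp [q2_ne hq1 k, q2_ne hq1 (k+1), hd2 k]
    ring
  have hwlt : ‖q ^ (r - s : ℤ)‖ < 1 := by
    have hd : r - s = ((r - s - 1).toNat : ℤ) + 1 := by omega
    rw [hd]
    rw [show ((r - s - 1).toNat : ℤ) + 1 = (((r - s - 1).toNat + 1 : ℕ) : ℤ) by push_cast; ring,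
      zpow_natCast, norm_pow]
    exact pow_lt_one₀ (norm_nonneg q) hq1 (Nat.succ_ne_zero _)
  have hw : ∀ k : ℕ, q ^ (r * (k:ℤ) - s * ((k:ℤ) + 1)) = q ^ (-s) * (q ^ (r-s)) ^ k := by
    intro k
    rw [← zpow_natCast (q ^ (r-s)) k, ← zpow_mul, ← zpow_add₀ hq0]
    congr 1; ring
  have htend : Tendsto Φ atTop (nhds 0) := by
    have t1 : Tendsto (fun k : ℕ => 1 - (-(q ^ (-α))) * q ^ k) atTop (nhds 1) := by
      simpa using (tendsto_const_nhds (x := (1:ℂ))).sub (tendsto_cq q (-(q ^ (-α))) hq1)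
    have t2 : Tendsto (fun k : ℕ => 1 - a * q ^ k) atTop (nhds 1) := by
      simpa using (tendsto_const_nhds (x := (1:ℂ))).sub (tendsto_cq q a hq1)
    have t3 : Tendsto (fun k : ℕ => 1 - q ^ 2 * (q ^ 2) ^ k) atTop (nhds 1) := by
      simpa using (tendsto_const_nhds (x := (1:ℂ))).sub (tendsto_cq (q^2) (q^2) hq2)
    have t4 : Tendsto (fun k : ℕ => (q ^ (r-s : ℤ)) ^ k) atTop (nhds 0) :=
      tendsto_pow_atTop_nhds_zero_of_norm_lt_one hwlt
    have key : Tendsto (fun k : ℕ =>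
        (1 - (-(q ^ (-α))) * q ^ k) * (1 - a * q ^ k) / (1 - q ^ 2 * (q ^ 2) ^ k) *
          (q ^ α * (q ^ (-s : ℤ) * (q ^ (r-s : ℤ)) ^ k)) * (z * t)) atTop (nhds 0) := by
      have := (((t1.mul t2).div t3 one_ne_zero).mul
        ((tendsto_const_nhds (x := q ^ α)).mul
          ((tendsto_const_nhds (x := q ^ (-s : ℤ))).mul t4))).mul
        (tendsto_const_nhds (x := z * t))
      simpa using this
    apply key.congr
    intro k
    simp only [hΦ, hw]
  apply summable_of_ratio_norm_eventually_le (r := 1/2) (by norm_num)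
  have hev : ∀ᶠ k in atTop, ‖Φ k‖ ≤ 1/2 := by
    have := htend.norm
    simp only [norm_zero] at this
    exact this.eventually_le_const (by norm_num)
  filter_upwards [hev] with k hk
  rw [Real.norm_of_nonneg (norm_nonneg _), Real.norm_of_nonneg (norm_nonneg _), hrec, norm_mul]
  calc ‖Aterm q α a z t r s k‖ * ‖Φ k‖ ≤ ‖Aterm q α a z t r s k‖ * (1/2) :=
        mul_le_mul_of_nonneg_left hk (norm_nonneg _)
    _ = 1/2 * ‖Aterm q α a z t r s k‖ := mul_comm _ _

/-! ### Summability of the B series -/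

lemma summable_B {q : ℂ} (hq1 : ‖q‖ < 1) (x y : ℂ) {u : ℂ} (hu : ‖x * u‖ < 1) :
    Summable (fun m : ℕ => ‖Bterm q x y u m‖) := by
  have hrec : ∀ m : ℕ, Bterm q x y u (m+1)
      = Bterm q x y u m * ((x - q ^ m * y) * u / (1 - q * q ^ m)) := by
    intro m
    unfold Bterm
    rw [cauchyP_succ, qPoch_succ, pow_succ]
    field_simp [qq_ne hq1 m, dq_ne hq1 m]
  have hten : Tendsto (fun m : ℕ => ‖(x - q ^ m * y) * u / (1 - q * q ^ m)‖)
      atTop (nhds ‖x * u‖) := by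
    apply Tendsto.norm
    have h1 : Tendsto (fun m : ℕ => (x - q ^ m * y)) atTop (nhds x) := by
      simpa [mul_comm] using (tendsto_const_nhds (x := x)).sub (tendsto_cq q y hq1)
    have h2 : Tendsto (fun m : ℕ => (1 : ℂ) - q * q ^ m) atTop (nhds 1) := by
      simpa using (tendsto_const_nhds (x := (1:ℂ))).sub (tendsto_cq q q hq1)
    have h3 := (h1.mul (tendsto_const_nhds (x := u))).div h2 one_ne_zero
    simp only [div_one] at h3
    exact h3
  set ρ : ℝ := (1 + ‖x * u‖) / 2 with hρ
  have hρ1 : ρ < 1 := by rw [hρ]; linarith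
  have hxρ : ‖x * u‖ < ρ := by rw [hρ]; linarith
  apply summable_of_ratio_norm_eventually_le hρ1
  filter_upwards [hten.eventually_le_const hxρ] with m hm
  rw [Real.norm_of_nonneg (norm_nonneg _), Real.norm_of_nonneg (norm_nonneg _), hrec, norm_mul]
  calc ‖Bterm q x y u m‖ * ‖(x - q ^ m * y) * u / (1 - q * q ^ m)‖
      ≤ ‖Bterm q x y u m‖ * ρ := by
        apply mul_le_mul_of_nonneg_left hm (norm_nonneg _)
    _ = ρ * ‖Bterm q x y u m‖ := mul_comm _ _

/-! ### Infinite products -/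

lemma summable_log {q : ℂ} (hq1 : ‖q‖ < 1) (c : ℂ) :
    Summable (fun j : ℕ => Complex.log (1 - c * q ^ j)) := by
  have h0 : Tendsto (fun j : ℕ => ‖c * q ^ j‖) atTop (nhds 0) := by
    simpa using (tendsto_cq q c hq1).norm
  obtain ⟨N, hN⟩ := (h0.eventually_le_const (by norm_num : (0:ℝ) < 1/2)).exists_forall_of_atTop
  rw [← summable_nat_add_iff N]
  apply Summable.of_norm_bounded (g := fun j => (3/2 * ‖c * q ^ N‖) * ‖q‖ ^ j)
  · exact (summable_geometric_of_lt_one (norm_nonneg q) hq1).mul_left _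
  · intro j
    have hsm : ‖c * q ^ (j + N)‖ ≤ 1/2 := hN (j + N) (Nat.le_add_left N j)
    have h : (1 : ℂ) - c * q ^ (j + N) = 1 + (-(c * q ^ (j + N))) := by ring
    rw [h]
    refine le_trans (norm_log_one_add_half_le_self (by simpa using hsm)) ?_
    rw [norm_neg, norm_mul, norm_pow, pow_add]
    rw [norm_mul, norm_pow]
    ring_nf
    nlinarith [norm_nonneg c, norm_nonneg q, pow_nonneg (norm_nonneg q) j,
      pow_nonneg (norm_nonneg q) N]

lemma hasProd_poch {q : ℂ} (hq1 : ‖q‖ < 1) (c : ℂ) :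
    HasProd (fun j : ℕ => 1 - c * q ^ j) (qPochInf q c) := by
  by_cases h : ∀ j : ℕ, 1 - c * q ^ j ≠ 0
  · have hm : Multipliable (fun j : ℕ => 1 - c * q ^ j) := by
      have := Complex.multipliable_of_summable_log (summable_log hq1 c)
      exact this
    exact hm.hasProd
  · push_neg at h
    obtain ⟨j0, hj0⟩ := h
    have h0 : HasProd (fun j : ℕ => 1 - c * q ^ j) 0 := by
      unfold HasProd
      apply tendsto_const_nhds.congr'
      filter_upwards [eventually_ge_atTop ({j0} : Finset ℕ)] with s hs
      exact (Finset.prod_eq_zero (hs (Finset.mem_singleton_self j0)) hj0).symm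
    have h1 : qPochInf q c = 0 := h0.tprod_eq
    rw [h1]
    exact h0

lemma pochInf_ne {q : ℂ} (hq1 : ‖q‖ < 1) (c : ℂ) (h : ∀ j : ℕ, 1 - c * q ^ j ≠ 0) :
    qPochInf q c ≠ 0 := by
  have h2 := Complex.cexp_tsum_eq_tprod (f := fun j : ℕ => 1 - c * q ^ j) h (summable_log hq1 c)
  rw [qPochInf, ← h2]
  exact Complex.exp_ne_zero _

/-! ### The Cauchy q-binomial theorem -/

lemma norm_xu_mul {q x u : ℂ} (hq1 : ‖q‖ < 1) (hu : ‖x * u‖ < 1) : ‖x * (q * u)‖ < 1 := by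
  rw [show x * (q * u) = (x * u) * q by ring, norm_mul]
  exact lt_of_le_of_lt (mul_le_of_le_one_right (norm_nonneg _) hq1.le) hu

lemma Bterm_zero (q x y u : ℂ) : Bterm q x y u 0 = 1 := by
  simp [Bterm, cauchyP, qPoch]

lemma funeq {q : ℂ} (hq1 : ‖q‖ < 1) (x y : ℂ) {u : ℂ} (hu : ‖x * u‖ < 1) :
    (1 - x * u) * ∑' m, Bterm q x y u m = (1 - y * u) * ∑' m, Bterm q x y (q * u) m := by
  have hBu : Summable (Bterm q x y u) := (summable_B hq1 x y hu).of_norm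
  have hBqu : Summable (Bterm q x y (q * u)) := (summable_B hq1 x y (norm_xu_mul hq1 hu)).of_norm
  have h1 : ∀ m : ℕ, Bterm q x y u (m+1) - Bterm q x y (q*u) (m+1)
      = x * u * Bterm q x y u m - y * u * Bterm q x y (q*u) m := by
    intro m
    unfold Bterm
    rw [cauchyP_succ, qPoch_succ, pow_succ, mul_pow, pow_succ]
    field_simp [qq_ne hq1 m, dq_ne hq1 m]
    rw [div_eq_iff (by rw [mul_comm]; exact dq_ne hq1 m)]
    ring
  have h2 : (∑' m, Bterm q x y u m) - (∑' m, Bterm q x y (q*u) m)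
      = x * u * (∑' m, Bterm q x y u m) - y * u * (∑' m, Bterm q x y (q*u) m) := by
    rw [← Summable.tsum_sub hBu hBqu]
    rw [Summable.tsum_eq_zero_add (hBu.sub hBqu)]
    simp only [Bterm_zero, sub_self, zero_add]
    rw [tsum_congr h1]
    rw [Summable.tsum_sub (hBu.mul_left (x*u)) (hBqu.mul_left (y*u)), tsum_mul_left, tsum_mul_left]
  linear_combination h2

lemma iter {q : ℂ} (hq1 : ‖q‖ < 1) (x y t : ℂ) (hxt : ‖x * t‖ < 1) (N : ℕ) :
    (∑' m, Bterm q x y t m) * (∏ j ∈ Finset.range N, (1 - x * t * q ^ j))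
      = (∏ j ∈ Finset.range N, (1 - y * t * q ^ j)) * ∑' m, Bterm q x y (q ^ N * t) m := by
  induction N with
  | zero => simp
  | succ N ih =>
    have hu : ‖x * (q ^ N * t)‖ < 1 := by
      rw [show x * (q ^ N * t) = (x * t) * q ^ N by ring, norm_mul]
      exact lt_of_le_of_lt (mul_le_of_le_one_right (norm_nonneg _)
        (by rw [norm_pow]; exact pow_le_one₀ (norm_nonneg q) hq1.le)) hxt
    have e := funeq hq1 x y hu
    rw [show q * (q ^ N * t) = q ^ (N+1) * t by ring] at e
    rw [Finset.prod_range_succ, Finset.prod_range_succ]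
    linear_combination (1 - x * t * q ^ N) * ih
      + (∏ j ∈ Finset.range N, (1 - y * t * q ^ j)) * e

lemma Bterm_scale (q x y t : ℂ) (N m : ℕ) :
    Bterm q x y (q ^ N * t) m = (q ^ N) ^ m * Bterm q x y t m := by
  unfold Bterm
  rw [mul_pow]
  ring

set_option maxHeartbeats 1000000 in
lemma tendsto_F {q : ℂ} (hq1 : ‖q‖ < 1) (x y t : ℂ) (hxt : ‖x * t‖ < 1) :
    Tendsto (fun N : ℕ => ∑' m, Bterm q x y (q ^ N * t) m) atTop (nhds 1) := by
  have hqN : ∀ N : ℕ, ‖x * (q ^ N * t)‖ < 1 := by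
    intro N
    rw [show x * (q ^ N * t) = (x * t) * q ^ N by ring, norm_mul]
    exact lt_of_le_of_lt (mul_le_of_le_one_right (norm_nonneg _)
      (by rw [norm_pow]; exact pow_le_one₀ (norm_nonneg q) hq1.le)) hxt
  have hsh : Summable (fun m : ℕ => ‖Bterm q x y t (m+1)‖) :=
    (summable_nat_add_iff 1).mpr (summable_B hq1 x y hxt)
  set M : ℝ := ∑' m : ℕ, ‖Bterm q x y t (m+1)‖ with hM
  have hbound : ∀ N : ℕ, ‖(∑' m, Bterm q x y (q ^ N * t) m) - 1‖ ≤ ‖q‖ ^ N * M := by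
    intro N
    have hs : Summable (Bterm q x y (q ^ N * t)) := (summable_B hq1 x y (hqN N)).of_norm
    rw [Summable.tsum_eq_zero_add hs, Bterm_zero, add_sub_cancel_left]
    have hsh2 : Summable (fun m : ℕ => ‖Bterm q x y (q ^ N * t) (m+1)‖) :=
      (summable_nat_add_iff 1).mpr (summable_B hq1 x y (hqN N))
    refine le_trans (norm_tsum_le_tsum_norm hsh2) ?_
    rw [hM, ← tsum_mul_left]
    apply Summable.tsum_le_tsum _ hsh2 (hsh.mul_left _)
    intro m
    rw [Bterm_scale, norm_mul]
    apply mul_le_mul_of_nonneg_right _ (norm_nonneg _)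
    rw [norm_pow, norm_pow]
    exact pow_le_of_le_one (by positivity) (pow_le_one₀ (norm_nonneg q) hq1.le)
      (Nat.succ_ne_zero m)
  have h0 : Tendsto (fun N : ℕ => ‖q‖ ^ N * M) atTop (nhds 0) := by
    have h1 : Tendsto (fun N : ℕ => ‖q‖ ^ N) atTop (nhds 0) :=
      tendsto_pow_atTop_nhds_zero_of_norm_lt_one (by rwa [Real.norm_of_nonneg (norm_nonneg q)])
    simpa using h1.mul_const M
  have h3 := (squeeze_zero_norm hbound h0).add_const 1
  simpa using h3

lemma qbinom_thm {q : ℂ} (hq1 : ‖q‖ < 1) (x y t : ℂ) (hxt : ‖x * t‖ < 1) :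
    (∑' m, Bterm q x y t m) * qPochInf q (x * t) = qPochInf q (y * t) := by
  have hPx := (hasProd_poch hq1 (x * t)).tendsto_prod_nat
  have hPy := (hasProd_poch hq1 (y * t)).tendsto_prod_nat
  have hFl := tendsto_F hq1 x y t hxt
  have hL : Tendsto (fun N : ℕ => (∑' m, Bterm q x y t m)
      * ∏ j ∈ Finset.range N, (1 - x * t * q ^ j)) atTop
      (nhds ((∑' m, Bterm q x y t m) * qPochInf q (x * t))) :=
    hPx.const_mul _
  have hR : Tendsto (fun N : ℕ => (∏ j ∈ Finset.range N, (1 - y * t * q ^ j))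
      * ∑' m, Bterm q x y (q ^ N * t) m) atTop (nhds (qPochInf q (y * t) * 1)) :=
    hPy.mul hFl
  rw [mul_one] at hR
  exact tendsto_nhds_unique (hL.congr (fun N => iter hq1 x y t hxt N)) hR


/-- Generating function for the generalized q-polynomials. -/
theorem stmt1 (q : ℂ) (hq0 : q ≠ 0) (hq1 : ‖q‖ < 1) (α a x y z t : ℂ) (r s : ℤ)
    (hrs : s < r) (hxt : ‖x * t‖ < 1) :
    Summable (fun n : ℕ => ‖Ltil q r s α x y z a n * t ^ n / qPoch q q n‖) ∧
    Summable (fun k : ℕ => ‖qPoch q (-(q ^ (-α))) k * qPoch q a k / qPoch (q ^ 2) (q ^ 2) k *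
        (q ^ ((k : ℂ) * α) * q ^ (r * (k.choose 2 : ℤ) - s * ((k + 1).choose 2 : ℤ))) *
        (z * t) ^ k‖) ∧
    ∑' n : ℕ, Ltil q r s α x y z a n * t ^ n / qPoch q q n =
      qPochInf q (y * t) / qPochInf q (x * t) *
        ∑' k : ℕ, qPoch q (-(q ^ (-α))) k * qPoch q a k / qPoch (q ^ 2) (q ^ 2) k *
          (q ^ ((k : ℂ) * α) * q ^ (r * (k.choose 2 : ℤ) - s * ((k + 1).choose 2 : ℤ))) *
          (z * t) ^ k := by
  have hA := summable_A hq0 hq1 α a z t r s hrs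
  have hB := summable_B hq1 x y hxt
  have key : ∀ n : ℕ, Ltil q r s α x y z a n * t ^ n / qPoch q q n
      = ∑ kl ∈ Finset.HasAntidiagonal.antidiagonal n, Aterm q α a z t r s kl.1 * Bterm q x y t kl.2 := by
    intro n
    rw [Finset.Nat.sum_antidiagonal_eq_sum_range_succ_mk, Ltil, Finset.sum_mul, Finset.sum_div]
    apply Finset.sum_congr rfl
    intro k hk
    exact term_eq hq0 hq1 α a x y z t r s (Nat.lt_succ_iff.mp (Finset.mem_range.mp hk))
  have hxne : ∀ j : ℕ, (1 : ℂ) - x * t * q ^ j ≠ 0 := by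
    intro j
    apply one_sub_ne
    rw [norm_mul]
    exact lt_of_le_of_lt (mul_le_of_le_one_right (norm_nonneg _) (norm_q_pow_le hq1 j)) hxt
  have hPxne : qPochInf q (x * t) ≠ 0 := pochInf_ne hq1 (x * t) hxne
  have Feq : (∑' m, Bterm q x y t m) = qPochInf q (y * t) / qPochInf q (x * t) :=
    (eq_div_iff hPxne).mpr (qbinom_thm hq1 x y t hxt)
  refine ⟨?_, ?_, ?_⟩
  · rw [show (fun n : ℕ => ‖Ltil q r s α x y z a n * t ^ n / qPoch q q n‖)
        = fun n : ℕ => ‖∑ kl ∈ Finset.HasAntidiagonal.antidiagonal n,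
            Aterm q α a z t r s kl.1 * Bterm q x y t kl.2‖ from
      funext fun n => by rw [key n]]
    exact summable_norm_sum_mul_antidiagonal_of_summable_norm hA hB
  · exact hA
  · rw [tsum_congr key, ← tsum_mul_tsum_eq_tsum_sum_antidiagonal_of_summable_norm hA hB, Feq]
    simp only [Aterm]
    ring


end
end

section
/- Let k ∈ ℕ and t, x, y, ω ∈ ℂ with ω ≠ 0, x ≠ 0, max{|xω|, |xt|} < 1, and y ω q^m ≠ 1 for all integers m ≥ 0. Then the series ∑_{n=0}^∞ (t^n/(q;q)_n) · D_ω^n{ ((yω;q)_∞/(xω;q)_∞) · ω^k } (q-derivatives taken with respect to ω) converges absolutely and its sum equals ((yω;q)_∞/(xω;q)_∞) · ω^k · ∑_{j=0}^{k} (−1)^j q^{kj − C(j,2)} ((q^{−k};q)_j (xω;q)_j / ((yω;q)_j (q;q)_j)) (t/ω)^j · ₂Φ₁[y/x, 0; yω q^j; q; xt]. -/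
noncomputable section

namespace Stmt5Aux
open Complex Finset
variable {q : ℂ}




lemma qPoch_succ (a : ℂ) (n : ℕ) : qPoch q a (n+1) = qPoch q a n * (1 - a*q^n) :=
  Finset.prod_range_succ _ _

lemma qPoch_add (a : ℂ) (m n : ℕ) : qPoch q a (m+n) = qPoch q a m * qPoch q (a*q^m) n := by
  induction n with
  | zero => simp [qPoch]
  | succ n ih =>
    rw [← add_assoc, qPoch_succ, ih, qPoch_succ, mul_assoc]
    congr 2
    rw [mul_assoc, ← pow_add]

lemma qPoch_ne_zero {a : ℂ} (ha : ∀ j : ℕ, 1 - a*q^j ≠ 0) (n : ℕ) : qPoch q a n ≠ 0 :=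
  Finset.prod_ne_zero_iff.2 fun j _ => ha j

lemma fac_ne_of_norm (hq1 : ‖q‖ < 1) {a : ℂ} (ha : ‖a‖ < 1) (j : ℕ) : 1 - a*q^j ≠ 0 := by
  intro h
  have h1 : a * q ^ j = 1 := by linear_combination -h
  have : ‖a * q^j‖ < 1 := by
    rw [norm_mul, norm_pow]
    calc ‖a‖ * ‖q‖^j ≤ ‖a‖ * 1 := by
          refine mul_le_mul_of_nonneg_left ?_ (norm_nonneg a)
          exact pow_le_one₀ (norm_nonneg q) hq1.le
    _ = ‖a‖ := mul_one _
    _ < 1 := ha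
  rw [h1] at this
  simp at this

lemma qPoch_q_ne_zero (hq1 : ‖q‖ < 1) (n : ℕ) : qPoch q q n ≠ 0 := by
  refine qPoch_ne_zero (fun j => ?_) n
  intro h
  have h1 : q * q ^ j = 1 := by linear_combination -h
  have : ‖q * q^j‖ < 1 := by
    rw [norm_mul, norm_pow]
    calc ‖q‖ * ‖q‖^j ≤ ‖q‖ * 1 :=
          mul_le_mul_of_nonneg_left (pow_le_one₀ (norm_nonneg q) hq1.le) (norm_nonneg q)
    _ = ‖q‖ := mul_one _
    _ < 1 := hq1
  rw [h1] at this
  simp at this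

lemma summable_log (hq1 : ‖q‖ < 1) (a : ℂ) :
    Summable (fun j : ℕ => Complex.log (1 - a*q^j)) := by
  refine Summable.of_norm ?_
  have hgeom : Summable (fun j : ℕ => (3/2 : ℝ) * (‖a‖ * ‖q‖^j)) :=
    ((summable_geometric_of_lt_one (norm_nonneg q) hq1).mul_left ‖a‖).mul_left _
  refine hgeom.of_norm_bounded_eventually_nat ?_
  have htend : Filter.Tendsto (fun j : ℕ => ‖a‖ * ‖q‖^j) Filter.atTop (nhds 0) := by
    simpa using (tendsto_pow_atTop_nhds_zero_of_lt_one (norm_nonneg q) hq1).const_mul ‖a‖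
  have hev : ∀ᶠ j : ℕ in Filter.atTop, ‖a‖ * ‖q‖^j ≤ 1/2 := by
    have := htend.eventually_le_const (by norm_num : (0:ℝ) < 1/2)
    simpa using this
  filter_upwards [hev] with j hj
  have hz : ‖-(a * q^j)‖ ≤ 1/2 := by
    rw [norm_neg, norm_mul, norm_pow]; exact hj
  have := Complex.norm_log_one_add_half_le_self hz
  rw [norm_norm]
  calc ‖Complex.log (1 - a*q^j)‖ = ‖Complex.log (1 + -(a*q^j))‖ := by ring_nf
    _ ≤ 3/2 * ‖-(a*q^j)‖ := this
    _ = 3/2 * (‖a‖ * ‖q‖^j) := by rw [norm_neg, norm_mul, norm_pow]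

lemma qPochInf_eq_exp (hq1 : ‖q‖ < 1) {a : ℂ} (ha : ∀ j : ℕ, 1 - a*q^j ≠ 0) :
    qPochInf q a = Complex.exp (∑' j : ℕ, Complex.log (1 - a*q^j)) := by
  have := Complex.cexp_tsum_eq_tprod (f := fun j : ℕ => 1 - a*q^j) ha (summable_log hq1 a)
  exact this.symm

lemma qPochInf_ne_zero (hq1 : ‖q‖ < 1) {a : ℂ} (ha : ∀ j : ℕ, 1 - a*q^j ≠ 0) :
    qPochInf q a ≠ 0 := by
  rw [qPochInf_eq_exp hq1 ha]; exact Complex.exp_ne_zero _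

lemma qPochInf_split (hq1 : ‖q‖ < 1) {a : ℂ} (ha : ∀ j : ℕ, 1 - a*q^j ≠ 0) (n : ℕ) :
    qPochInf q a = qPoch q a n * qPochInf q (a * q^n) := by
  have ha' : ∀ j : ℕ, 1 - (a*q^n)*q^j ≠ 0 := fun j => by
    rw [mul_assoc, ← pow_add]; exact ha (n+j)
  rw [qPochInf_eq_exp hq1 ha, qPochInf_eq_exp hq1 ha',
    ← (summable_log hq1 a).sum_add_tsum_nat_add n, Complex.exp_add]
  congr 1
  · rw [Complex.exp_sum, qPoch]
    exact Finset.prod_congr rfl fun j _ => Complex.exp_log (ha j)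
  · congr 1
    refine tsum_congr fun j => ?_
    congr 1
    rw [mul_assoc, ← pow_add, add_comm j n]





lemma qPoch_zero (a : ℂ) : qPoch q a 0 = 1 := by simp [qPoch]

lemma qPoch_one (a : ℂ) : qPoch q a 1 = 1 - a := by simp [qPoch]

lemma qPochInf_step (hq1 : ‖q‖ < 1) {a : ℂ} (ha : ∀ j : ℕ, 1 - a*q^j ≠ 0) :
    qPochInf q a = (1 - a) * qPochInf q (a * q) := by
  have := qPochInf_split hq1 ha 1
  rwa [qPoch_one, pow_one] at this

lemma qBinom_zero (hq1 : ‖q‖ < 1) (n : ℕ) : qBinom q n 0 = 1 := by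
  unfold qBinom
  rw [qPoch_zero, Nat.sub_zero, one_mul, div_self (qPoch_q_ne_zero hq1 n)]

lemma qBinom_self (hq1 : ‖q‖ < 1) (n : ℕ) : qBinom q n n = 1 := by
  unfold qBinom
  rw [Nat.sub_self, qPoch_zero, mul_one, div_self (qPoch_q_ne_zero hq1 n)]

lemma qBinom_pascal (hq1 : ‖q‖ < 1) {n j : ℕ} (h : j + 1 ≤ n) :
    qBinom q (n+1) (j+1) = q^(j+1) * qBinom q n (j+1) + qBinom q n j := by
  obtain ⟨m, rfl⟩ : ∃ m, n = (j+1) + m := ⟨n - (j+1), by omega⟩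
  have e1 : (j+1) + m + 1 - (j+1) = m + 1 := by omega
  have e2 : (j+1) + m - (j+1) = m := by omega
  have e3 : (j+1) + m - j = m + 1 := by omega
  unfold qBinom
  rw [e1, e2, e3]
  have hj := qPoch_q_ne_zero (q := q) hq1 j
  have hm := qPoch_q_ne_zero (q := q) hq1 m
  have hn := qPoch_q_ne_zero (q := q) hq1 ((j+1)+m)
  have h1j : (1 : ℂ) - q*q^j ≠ 0 := by
    have := qPoch_q_ne_zero (q := q) hq1 (j+1)
    rw [qPoch_succ] at this
    exact right_ne_zero_of_mul this
  have h1m : (1 : ℂ) - q*q^m ≠ 0 := by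
    have := qPoch_q_ne_zero (q := q) hq1 (m+1)
    rw [qPoch_succ] at this
    exact right_ne_zero_of_mul this
  have h1n : (1 : ℂ) - q*q^((j+1)+m) ≠ 0 := by
    have := qPoch_q_ne_zero (q := q) hq1 ((j+1)+m+1)
    rw [qPoch_succ] at this
    exact right_ne_zero_of_mul this
  rw [qPoch_succ q ((j+1)+m), qPoch_succ q j, qPoch_succ q m]
  field_simp
  ring

lemma Dq_iter_pow (hq0 : q ≠ 0) (k : ℕ) :
    ∀ (j : ℕ) (w : ℂ), w ≠ 0 →
      (Dq q)^[j] (fun z => z^k) w = (∏ i ∈ range j, (1 - q^(k-i))) * w^(k-j) := by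
  intro j
  induction j with
  | zero => intro w hw; simp
  | succ j ih =>
    intro w hw
    rw [Function.iterate_succ_apply']
    show ((Dq q)^[j] (fun z => z^k) w - (Dq q)^[j] (fun z => z^k) (q*w)) / w = _
    rw [ih w hw, ih (q*w) (mul_ne_zero hq0 hw)]
    rcases lt_or_ge j k with h | h
    · have e1 : k - j = (k - (j+1)) + 1 := by omega
      rw [Finset.prod_range_succ, e1]
      rw [mul_pow, pow_succ]
      have : k - j = k - (j+1) + 1 := by omega
      field_simp
    · have e0 : k - j = 0 := by omega
      have e1 : k - (j+1) = 0 := by omega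
      rw [Finset.prod_range_succ, e0, e1]
      simp

lemma pascal_sum (hq1 : ‖q‖ < 1) (n : ℕ) (A : ℕ → ℂ) :
    ∑ j ∈ range (n+1), (q^j * qBinom q n j * A j + qBinom q n j * A (j+1))
      = ∑ j ∈ range (n+2), qBinom q (n+1) j * A j := by
  rw [Finset.sum_add_distrib, Finset.sum_range_succ' (fun j => q^j * qBinom q n j * A j) n,
      Finset.sum_range_succ (fun j => qBinom q n j * A (j+1)) n,
      show n+2 = (n+1)+1 from rfl,
      Finset.sum_range_succ (fun j => qBinom q (n+1) j * A j) (n+1),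
      Finset.sum_range_succ' (fun j => qBinom q (n+1) j * A j) n,
      qBinom_zero hq1, qBinom_zero hq1, qBinom_self hq1, qBinom_self hq1]
  have hcong : ∀ j ∈ range n, qBinom q (n+1) (j+1) * A (j+1)
      = q^(j+1) * qBinom q n (j+1) * A (j+1) + qBinom q n j * A (j+1) := by
    intro j hj
    rw [qBinom_pascal hq1 (by simpa using Finset.mem_range.1 hj)]
    ring
  rw [Finset.sum_congr rfl hcong, Finset.sum_add_distrib]
  ring

lemma Dq_iter_mul (hq0 : q ≠ 0) (hq1 : ‖q‖ < 1) (f g : ℂ → ℂ) :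
    ∀ (n : ℕ) (w : ℂ), w ≠ 0 →
      (Dq q)^[n] (fun z => f z * g z) w
        = ∑ j ∈ range (n+1), qBinom q n j * ((Dq q)^[j] f w * (Dq q)^[n-j] g (q^j * w)) := by
  intro n
  induction n with
  | zero =>
    intro w hw
    simp [qBinom_zero hq1]
  | succ n ih =>
    intro w hw
    rw [Function.iterate_succ_apply']
    show ((Dq q)^[n] (fun z => f z * g z) w - (Dq q)^[n] (fun z => f z * g z) (q*w)) / w = _
    rw [ih w hw, ih (q*w) (mul_ne_zero hq0 hw)]
    set A : ℕ → ℂ := fun j => (Dq q)^[j] f w * (Dq q)^[n+1-j] g (q^j*w) with hA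
    have key : ∀ j ∈ range (n+1),
        qBinom q n j * ((Dq q)^[j] f w * (Dq q)^[n-j] g (q^j * w))
          - qBinom q n j * ((Dq q)^[j] f (q*w) * (Dq q)^[n-j] g (q^j * (q*w)))
        = w * (q^j * qBinom q n j * A j + qBinom q n j * A (j+1)) := by
      intro j hj
      have hju : q^j * w ≠ 0 := mul_ne_zero (pow_ne_zero _ hq0) hw
      have e1 : (Dq q)^[n-j] g (q^j*w) - (Dq q)^[n-j] g (q^j*(q*w))
          = (q^j*w) * (Dq q)^[n+1-j] g (q^j*w) := by
        have hnj : n+1-j = (n-j)+1 := by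
          have := Finset.mem_range.1 hj; omega
        rw [hnj, Function.iterate_succ_apply']
        show _ = (q^j*w) * (((Dq q)^[n-j] g (q^j*w) - (Dq q)^[n-j] g (q*(q^j*w))) / (q^j*w))
        rw [mul_div_cancel₀ _ hju]
        congr 2
        ring
      have e2 : (Dq q)^[j] f w - (Dq q)^[j] f (q*w) = w * (Dq q)^[j+1] f w := by
        rw [Function.iterate_succ_apply']
        show _ = w * (((Dq q)^[j] f w - (Dq q)^[j] f (q*w)) / w)
        rw [mul_div_cancel₀ _ hw]
      have e3 : A (j+1) = (Dq q)^[j+1] f w * (Dq q)^[n-j] g (q^(j+1)*w) := by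
        rw [hA]
        simp only [Nat.succ_sub_succ]
      rw [e3, hA]
      simp only
      linear_combination qBinom q n j * (Dq q)^[j] f w * e1
        + qBinom q n j * (Dq q)^[n-j] g (q^j*(q*w)) * e2
        + qBinom q n j * w * (Dq q)^[n-j] g (q^(j+1)*w) * e2 * 0
        + (qBinom q n j * (Dq q)^[n-j] g (q^(j+1)*w) * w - qBinom q n j * (Dq q)^[n-j] g (q^j*(q*w)) * w) * (Dq q)^[j+1] f w
        + qBinom q n j * ((Dq q)^[j+1] f w * w) * (congrArg ((Dq q)^[n-j] g) (by ring : q^j*(q*w) = q^(j+1)*w))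
    have step1 : (∑ j ∈ range (n+1), qBinom q n j * ((Dq q)^[j] f w * (Dq q)^[n-j] g (q^j * w)))
        - ∑ j ∈ range (n+1), qBinom q n j * ((Dq q)^[j] f (q*w) * (Dq q)^[n-j] g (q^j * (q*w)))
        = w * ∑ j ∈ range (n+1), (q^j * qBinom q n j * A j + qBinom q n j * A (j+1)) := by
      rw [← Finset.sum_sub_distrib, Finset.mul_sum]
      exact Finset.sum_congr rfl key
    rw [step1, mul_div_cancel_left₀ _ hw]
    have hgoal := pascal_sum hq1 n A
    simp only [hA] at hgoal ⊢
    exact hgoal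

lemma cauchyP_succ (x y : ℂ) (n : ℕ) :
    cauchyP q x y (n+1) = cauchyP q x y n * (x - q^n * y) := Finset.prod_range_succ _ _

lemma Dq_iter_ratio (hq0 : q ≠ 0) (hq1 : ‖q‖ < 1) (x y : ℂ) :
    ∀ (n : ℕ) (w : ℂ), w ≠ 0 → ‖x*w‖ < 1 → (∀ m : ℕ, 1 - y*w*q^m ≠ 0) →
    (Dq q)^[n] (fun z => qPochInf q (y*z) / qPochInf q (x*z)) w
      = cauchyP q x y n * qPochInf q (y*q^n*w) / qPochInf q (x*w) := by
  intro n
  induction n with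
  | zero =>
    intro w hw hxw hyw
    simp [cauchyP]
  | succ n ih =>
    intro w hw hxw hyw
    have hxw' : ‖x*(q*w)‖ < 1 := by
      calc ‖x*(q*w)‖ = ‖q‖ * ‖x*w‖ := by rw [show x*(q*w) = q*(x*w) by ring, norm_mul]
      _ ≤ 1 * ‖x*w‖ := mul_le_mul_of_nonneg_right hq1.le (norm_nonneg _)
      _ = ‖x*w‖ := one_mul _
      _ < 1 := hxw
    have hyw' : ∀ m : ℕ, 1 - y*(q*w)*q^m ≠ 0 := by
      intro m
      have := hyw (m+1)
      rw [show y*w*q^(m+1) = y*(q*w)*q^m by ring] at this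
      exact this
    rw [Function.iterate_succ_apply']
    show ((Dq q)^[n] (fun z => qPochInf q (y*z) / qPochInf q (x*z)) w
        - (Dq q)^[n] (fun z => qPochInf q (y*z) / qPochInf q (x*z)) (q*w)) / w = _
    rw [ih w hw hxw hyw, ih (q*w) (mul_ne_zero hq0 hw) hxw' hyw']
    -- nonvanishing facts
    have hxfac : ∀ j : ℕ, 1 - (x*w)*q^j ≠ 0 := fun j => fac_ne_of_norm hq1 hxw j
    have hxfac' : ∀ j : ℕ, 1 - (x*(q*w))*q^j ≠ 0 := fun j => fac_ne_of_norm hq1 hxw' j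
    have hyfacn : ∀ j : ℕ, 1 - (y*q^n*w)*q^j ≠ 0 := by
      intro j
      have := hyw (n+j)
      rw [show y*w*q^(n+j) = (y*q^n*w)*q^j by rw [pow_add]; ring] at this
      exact this
    have hPx : qPochInf q (x*w) ≠ 0 := qPochInf_ne_zero hq1 hxfac
    have hPx' : qPochInf q (x*(q*w)) ≠ 0 := qPochInf_ne_zero hq1 hxfac'
    have h1x : (1 : ℂ) - x*w ≠ 0 := by
      have := hxfac 0; rwa [pow_zero, mul_one] at this
    -- splitting identities
    have hC : qPochInf q (x*w) = (1 - x*w) * qPochInf q (x*(q*w)) := by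
      have := qPochInf_step hq1 hxfac
      rwa [show x*w*q = x*(q*w) by ring] at this
    have hAx : qPochInf q (y*q^n*w) = (1 - y*q^n*w) * qPochInf q (y*q^(n+1)*w) := by
      have := qPochInf_step hq1 hyfacn
      rwa [show y*q^n*w*q = y*q^(n+1)*w by ring] at this
    have hB : qPochInf q (y*q^n*(q*w)) = qPochInf q (y*q^(n+1)*w) := by
      rw [show y*q^n*(q*w) = y*q^(n+1)*w by ring]
    rw [hAx, hB, hC, cauchyP_succ]
    have h1x' : (1:ℂ) - w*x ≠ 0 := by rwa [mul_comm w x]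
    have hPx'' : qPochInf q (w*q*x) ≠ 0 := by rwa [show w*q*x = x*(q*w) by ring]
    field_simp
    ring



lemma geom_sum_le_inv (hq1 : ‖q‖ < 1) (m : ℕ) :
    ∑ i ∈ range m, ‖q‖^i ≤ (1 - ‖q‖)⁻¹ := by
  have h0 : (0:ℝ) ≤ ‖q‖ := norm_nonneg q
  have h1 : (0:ℝ) < 1 - ‖q‖ := by linarith
  calc ∑ i ∈ range m, ‖q‖^i ≤ ∑' i : ℕ, ‖q‖^i :=
        Summable.sum_le_tsum (range m) (fun i _ => pow_nonneg h0 i)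
          (summable_geometric_of_lt_one h0 hq1)
  _ = (1 - ‖q‖)⁻¹ := tsum_geometric_of_lt_one h0 hq1

lemma norm_qPoch_le (hq1 : ‖q‖ < 1) (b : ℂ) (m : ℕ) :
    ‖qPoch q b m‖ ≤ Real.exp (‖b‖ * (1 - ‖q‖)⁻¹) := by
  have h0 : (0:ℝ) ≤ ‖q‖ := norm_nonneg q
  calc ‖qPoch q b m‖ = ∏ j ∈ range m, ‖1 - b*q^j‖ := by rw [qPoch, norm_prod]
  _ ≤ ∏ j ∈ range m, Real.exp (‖b‖ * ‖q‖^j) := by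
      refine Finset.prod_le_prod (fun j _ => norm_nonneg _) fun j _ => ?_
      calc ‖1 - b*q^j‖ ≤ ‖(1:ℂ)‖ + ‖b*q^j‖ := norm_sub_le _ _
      _ = 1 + ‖b‖ * ‖q‖^j := by rw [norm_one, norm_mul, norm_pow]
      _ ≤ Real.exp (‖b‖ * ‖q‖^j) := by
          have := Real.add_one_le_exp (‖b‖ * ‖q‖^j); linarith
  _ = Real.exp (∑ j ∈ range m, ‖b‖ * ‖q‖^j) := by rw [Real.exp_sum]
  _ ≤ Real.exp (‖b‖ * (1 - ‖q‖)⁻¹) := by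
      apply Real.exp_le_exp.2
      rw [← Finset.mul_sum]
      exact mul_le_mul_of_nonneg_left (geom_sum_le_inv hq1 m) (norm_nonneg b)

lemma one_sub_sum_le_prod (m : ℕ) (x : ℕ → ℝ) (h0 : ∀ i, 0 ≤ x i) (h1 : ∀ i, x i ≤ 1) :
    1 - ∑ i ∈ range m, x i ≤ ∏ i ∈ range m, (1 - x i) := by
  induction m with
  | zero => simp
  | succ m ih =>
    rw [Finset.sum_range_succ, Finset.prod_range_succ]
    have hp : (0:ℝ) ≤ ∏ i ∈ range m, (1 - x i) :=
      Finset.prod_nonneg fun i _ => by linarith [h1 i]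
    have hS : (0:ℝ) ≤ ∑ i ∈ range m, x i :=
      Finset.sum_nonneg fun i _ => h0 i
    nlinarith [h0 m, h1 m, ih]

lemma qPoch_lower (hq1 : ‖q‖ < 1) {b : ℂ} (hb : ∀ i : ℕ, 1 - b*q^i ≠ 0) :
    ∃ δ : ℝ, 0 < δ ∧ ∀ m : ℕ, δ ≤ ‖qPoch q b m‖ := by
  have h0 : (0:ℝ) ≤ ‖q‖ := norm_nonneg q
  have h1 : (0:ℝ) < 1 - ‖q‖ := by linarith
  -- find N with tail small
  obtain ⟨N, hN⟩ : ∃ N : ℕ, ‖b‖ * ‖q‖^N * (1-‖q‖)⁻¹ ≤ 1/2 := by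
    have htend : Filter.Tendsto (fun j : ℕ => ‖b‖ * ‖q‖^j * (1-‖q‖)⁻¹) Filter.atTop (nhds 0) := by
      have := (tendsto_pow_atTop_nhds_zero_of_lt_one h0 hq1).const_mul ‖b‖
      simpa using this.mul_const (1-‖q‖)⁻¹
    have := htend.eventually_le_const (by norm_num : (0:ℝ) < 1/2)
    exact this.exists
  -- tail lower bound: for c := b*q^N, ∀ l, 1/2 ≤ ‖qPoch q c l‖
  set c : ℂ := b * q^N with hc
  have hcb : ‖c‖ * (1-‖q‖)⁻¹ ≤ 1/2 := by
    rw [hc, norm_mul, norm_pow]; exact hN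
  have hcsmall : ∀ i : ℕ, ‖c‖ * ‖q‖^i ≤ 1 := by
    intro i
    have hp : ‖q‖^i ≤ 1 := pow_le_one₀ h0 hq1.le
    have h2 : ‖c‖ ≤ 1/2 := by
      have hinv : (1:ℝ) ≤ (1-‖q‖)⁻¹ := by
        have h2 := inv_anti₀ h1 (by linarith : 1-‖q‖ ≤ 1)
        simpa using h2
      nlinarith [norm_nonneg c]
    nlinarith [norm_nonneg c]
  have htail : ∀ l : ℕ, (1:ℝ)/2 ≤ ‖qPoch q c l‖ := by
    intro l
    calc (1:ℝ)/2 ≤ 1 - ‖c‖ * (1-‖q‖)⁻¹ := by linarith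
    _ ≤ 1 - ∑ i ∈ range l, ‖c‖ * ‖q‖^i := by
        have : ∑ i ∈ range l, ‖c‖ * ‖q‖^i ≤ ‖c‖ * (1-‖q‖)⁻¹ := by
          rw [← Finset.mul_sum]
          exact mul_le_mul_of_nonneg_left (geom_sum_le_inv hq1 l) (norm_nonneg c)
        linarith
    _ ≤ ∏ i ∈ range l, (1 - ‖c‖ * ‖q‖^i) :=
        one_sub_sum_le_prod l _ (fun i => mul_nonneg (norm_nonneg c) (pow_nonneg h0 i)) hcsmall
    _ ≤ ∏ i ∈ range l, ‖1 - c*q^i‖ := by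
        refine Finset.prod_le_prod (fun i _ => by linarith [hcsmall i]) (fun i _ => ?_)
        calc 1 - ‖c‖*‖q‖^i = ‖(1:ℂ)‖ - ‖c*q^i‖ := by simp [norm_mul]
        _ ≤ ‖1 - c*q^i‖ := norm_sub_norm_le _ _
    _ = ‖qPoch q c l‖ := by rw [qPoch, norm_prod]
  -- head values positive
  have hhead : ∀ m : ℕ, 0 < ‖qPoch q b m‖ := fun m =>
    norm_pos_iff.2 (qPoch_ne_zero hb m)
  set δ₀ : ℝ := (Finset.range (N+1)).inf' ⟨0, Finset.mem_range.2 (Nat.succ_pos N)⟩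
      (fun m => ‖qPoch q b m‖) with hδ₀
  have hδ₀pos : 0 < δ₀ := by
    rw [hδ₀]
    exact (Finset.lt_inf'_iff _).2 fun m _ => hhead m
  have hδ₀le : ∀ m ≤ N, δ₀ ≤ ‖qPoch q b m‖ := by
    intro m hm
    exact Finset.inf'_le _ (Finset.mem_range.2 (by omega))
  refine ⟨δ₀ / 2, by linarith, fun m => ?_⟩
  rcases le_or_gt m N with h | h
  · calc δ₀/2 ≤ δ₀ := by linarith
    _ ≤ ‖qPoch q b m‖ := hδ₀le m h
  · obtain ⟨l, rfl⟩ : ∃ l, m = N + l := ⟨m - N, by omega⟩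
    rw [qPoch_add, norm_mul]
    calc δ₀/2 = δ₀ * (1/2) := by ring
    _ ≤ ‖qPoch q b N‖ * ‖qPoch q (b*q^N) l‖ :=
        mul_le_mul (hδ₀le N le_rfl) (htail l) (by norm_num) (norm_nonneg _)


lemma cauchyP_eq {x : ℂ} (hx : x ≠ 0) (y : ℂ) (m : ℕ) :
    cauchyP q x y m = x^m * qPoch q (y/x) m := by
  rw [cauchyP, qPoch,
    show x^m = ∏ _j ∈ range m, x by rw [Finset.prod_const, Finset.card_range],
    ← Finset.prod_mul_distrib]
  refine Finset.prod_congr rfl fun j _ => ?_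
  field_simp

lemma coeff_id (hq0 : q ≠ 0) (k : ℕ) :
    ∀ j, j ≤ k → (∏ i ∈ range j, (1 - q^(k-i)))
      = (-1)^j * q^((k*j : ℤ) - (j.choose 2 : ℤ)) * qPoch q (q^(-(k:ℤ))) j := by
  intro j
  induction j with
  | zero => intro _; simp [qPoch]
  | succ j ih =>
    intro hj
    have hj' : j ≤ k := by omega
    rw [Finset.prod_range_succ, ih hj', qPoch_succ]
    have h1 : (q : ℂ)^(k-j : ℕ) = q^((k:ℤ) - j) := by
      rw [← zpow_natCast]
      congr 1
      omega
    have hsplit : q ^ ((k:ℤ) * ((j+1 : ℕ) : ℤ) - (((j+1).choose 2 : ℕ) : ℤ))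
        = q ^ ((k*j : ℤ) - (j.choose 2 : ℤ)) * q^((k:ℤ)-(j:ℤ)) := by
      rw [← zpow_add₀ hq0]
      congr 1
      have hch : (j+1).choose 2 = j.choose 2 + j := by
        rw [Nat.choose_succ_succ, Nat.choose_one_right, add_comm]
      rw [hch]
      push_cast
      ring
    rw [h1, hsplit]
    have hunit : q^((k:ℤ)-j) * (q^(-(k:ℤ)) * q^(j:ℕ)) = 1 := by
      rw [← zpow_natCast q j, ← zpow_add₀ hq0, ← zpow_add₀ hq0]
      norm_num
    linear_combination -((-(1:ℂ))^j * q^((k*j : ℤ) - (j.choose 2 : ℤ))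
      * qPoch q (q^(-(k:ℤ))) j) * hunit



/-- The summand `u n j`. -/
def uAux (q t x y ω : ℂ) (k n j : ℕ) : ℂ :=
  if j ≤ n then
    t^n / qPoch q q n * (qBinom q n j *
      (((∏ i ∈ Finset.range j, (1 - q^(k-i))) * ω^(k-j)) *
        (cauchyP q x y (n-j) * qPochInf q (y*q^(n-j)*(q^j*ω)) / qPochInf q (x*(q^j*ω)))))
  else 0

/-- The coefficient `C j`. -/
def CAux (q t x y ω : ℂ) (k j : ℕ) : ℂ :=
  ((∏ i ∈ Finset.range j, (1 - q^(k-i))) * (t/ω)^j * ω^k * qPoch q (x*ω) j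
      * qPochInf q (y*ω)) /
    (qPoch q q j * qPoch q (y*ω) j * qPochInf q (x*ω))

/-- The `₂Φ₁` summand `v j m`. -/
def vAux (q t x y ω : ℂ) (j m : ℕ) : ℂ :=
  qPoch q (y/x) m * (x*t)^m / (qPoch q (y*ω*q^j) m * qPoch q q m)

section MainLemmas

variable {q t x y ω : ℂ} {k : ℕ}

lemma qfac_ne (hq1 : ‖q‖ < 1) (i : ℕ) : (1 : ℂ) - q*q^i ≠ 0 := by
  have := qPoch_q_ne_zero (q := q) hq1 (i+1)
  rw [qPoch_succ] at this
  exact right_ne_zero_of_mul this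

lemma hxnorm (hq1 : ‖q‖ < 1) (hxω : ‖x * ω‖ < 1) (j : ℕ) : ‖x*(q^j*ω)‖ < 1 := by
  calc ‖x*(q^j*ω)‖ = ‖q‖^j * ‖x*ω‖ := by
        rw [show x*(q^j*ω) = q^j*(x*ω) by ring, norm_mul, norm_pow]
  _ ≤ 1 * ‖x*ω‖ :=
      mul_le_mul_of_nonneg_right (pow_le_one₀ (norm_nonneg q) hq1.le) (norm_nonneg _)
  _ = ‖x*ω‖ := one_mul _
  _ < 1 := hxω

lemma hyfac_shift (hyfac : ∀ m : ℕ, 1 - y*ω*q^m ≠ 0) (j : ℕ) :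
    ∀ m : ℕ, 1 - y*(q^j*ω)*q^m ≠ 0 := by
  intro m
  have := hyfac (j+m)
  rwa [show y*ω*q^(j+m) = y*(q^j*ω)*q^m by rw [pow_add]; ring] at this

lemma czero (hq0 : q ≠ 0) {j : ℕ} (hj : k < j) :
    (∏ i ∈ Finset.range j, ((1:ℂ) - q^(k-i))) = 0 := by
  refine Finset.prod_eq_zero (Finset.mem_range.2 hj) ?_
  rw [Nat.sub_self, pow_zero, sub_self]

lemma hT_lemma (hq0 : q ≠ 0) (hq1 : ‖q‖ < 1) (hω : ω ≠ 0) (hxω : ‖x * ω‖ < 1)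
    (hyfac : ∀ m : ℕ, 1 - y*ω*q^m ≠ 0) (n : ℕ) :
    t^n / qPoch q q n *
      ((Dq q)^[n] (fun w => qPochInf q (y*w) / qPochInf q (x*w) * w^k)) ω
    = ∑ j ∈ Finset.range (k+1), uAux q t x y ω k n j := by
  rw [show (fun w => qPochInf q (y*w) / qPochInf q (x*w) * w^k)
      = (fun z => z^k * (qPochInf q (y*z) / qPochInf q (x*z)))
    from funext fun w => mul_comm _ _]
  rw [Dq_iter_mul hq0 hq1 (fun z => z^k) (fun z => qPochInf q (y*z) / qPochInf q (x*z)) n ω hω]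
  rw [Finset.mul_sum]
  have h1 : ∀ j ∈ Finset.range (n+1),
      t^n / qPoch q q n * (qBinom q n j *
        ((Dq q)^[j] (fun z => z^k) ω *
          (Dq q)^[n-j] (fun z => qPochInf q (y*z) / qPochInf q (x*z)) (q^j * ω)))
      = uAux q t x y ω k n j := by
    intro j hj
    have hjn : j ≤ n := by have := Finset.mem_range.1 hj; omega
    rw [uAux, if_pos hjn]
    rw [Dq_iter_pow hq0 k j ω hω,
      Dq_iter_ratio hq0 hq1 x y (n-j) (q^j*ω) (mul_ne_zero (pow_ne_zero j hq0) hω)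
        (hxnorm hq1 hxω j) (hyfac_shift hyfac j)]
  rw [Finset.sum_congr rfl h1]
  -- now extend/shrink the range
  rcases le_or_gt n k with h | h
  · -- n+1 ≤ k+1 : extend, terms with j > n vanish by `if`
    refine Finset.sum_subset (by simp [Finset.range_subset]; omega) ?_
    intro j _ hj2
    have : n < j := by simpa using hj2
    rw [uAux, if_neg (by omega)]
  · -- k+1 ≤ n+1 : shrink, terms with j > k vanish by `czero`
    refine (Finset.sum_subset (by simp [Finset.range_subset]; omega) ?_).symm
    intro j _ hj2
    have hkj : k < j := by simpa using hj2
    rw [uAux]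
    split
    · rw [czero hq0 hkj]
      simp
    · rfl

end MainLemmas


section MainLemmas2

variable {q t x y ω : ℂ} {k : ℕ}

lemma hyfacj_lemma (hyfac : ∀ m : ℕ, 1 - y*ω*q^m ≠ 0) (j : ℕ) :
    ∀ i : ℕ, 1 - (y*ω*q^j)*q^i ≠ 0 := by
  intro i
  have := hyfac (j+i)
  rwa [show y*ω*q^(j+i) = (y*ω*q^j)*q^i by rw [pow_add]; ring] at this

lemma hval_lemma (hq0 : q ≠ 0) (hq1 : ‖q‖ < 1) (hω : ω ≠ 0) (hx : x ≠ 0)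
    (hxω : ‖x*ω‖ < 1) (hyfac : ∀ m : ℕ, 1 - y*ω*q^m ≠ 0) {j : ℕ} (hj : j ≤ k) (m : ℕ) :
    uAux q t x y ω k (m+j) j = CAux q t x y ω k j * vAux q t x y ω j m := by
  rw [uAux, if_pos (Nat.le_add_left j m), Nat.add_sub_cancel, qBinom, Nat.add_sub_cancel]
  have hxfacω : ∀ i : ℕ, 1 - (x*ω)*q^i ≠ 0 := fac_ne_of_norm hq1 hxω
  have hPx : qPochInf q (x*ω) ≠ 0 := qPochInf_ne_zero hq1 hxfacω
  have hyfacj := hyfacj_lemma hyfac j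
  have hqqj := qPoch_q_ne_zero (q := q) hq1 j
  have hqqm := qPoch_q_ne_zero (q := q) hq1 m
  have hqqmj := qPoch_q_ne_zero (q := q) hq1 (m+j)
  have hyjm : qPoch q (y*ω) (j+m) ≠ 0 := qPoch_ne_zero hyfac _
  have hyj : qPoch q (y*ω) j ≠ 0 := qPoch_ne_zero hyfac _
  have hyjq : qPoch q (y*ω*q^j) m ≠ 0 := qPoch_ne_zero hyfacj _
  have hxj : qPoch q (x*ω) j ≠ 0 := qPoch_ne_zero hxfacω _
  have Ey : qPochInf q (y*ω) = qPoch q (y*ω) (j+m) * qPochInf q (y*q^m*(q^j*ω)) := by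
    have := qPochInf_split hq1 hyfac (j+m)
    rwa [show y*ω*q^(j+m) = y*q^m*(q^j*ω) by rw [pow_add]; ring] at this
  have hyP : qPochInf q (y*q^m*(q^j*ω)) = qPochInf q (y*ω) / qPoch q (y*ω) (j+m) := by
    exact (eq_div_iff hyjm).2 (by linear_combination -Ey)
  have Ex : qPochInf q (x*ω) = qPoch q (x*ω) j * qPochInf q (x*(q^j*ω)) := by
    have := qPochInf_split hq1 hxfacω j
    rwa [show x*ω*q^j = x*(q^j*ω) by ring] at this
  have hxP : qPochInf q (x*(q^j*ω)) = qPochInf q (x*ω) / qPoch q (x*ω) j := by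
    exact (eq_div_iff hxj).2 (by linear_combination -Ex)
  have Eyadd : qPoch q (y*ω) (j+m) = qPoch q (y*ω) j * qPoch q (y*ω*q^j) m :=
    qPoch_add (y*ω) j m
  have hcau : cauchyP q x y m = x^m * qPoch q (y/x) m := cauchyP_eq hx y m
  have hωk : ω^(k-j) = ω^k / ω^j := by
    rw [eq_div_iff (pow_ne_zero j hω), ← pow_add]
    congr 1
    omega
  have hyjm' : qPoch q (ω*y) (j+m) ≠ 0 := by
    rw [show ω*y = y*ω from mul_comm ω y]; exact hyjm
  have hyj' : qPoch q (ω*y) j ≠ 0 := by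
    rw [show ω*y = y*ω from mul_comm ω y]; exact hyj
  have hxj' : qPoch q (ω*x) j ≠ 0 := by
    rw [show ω*x = x*ω from mul_comm ω x]; exact hxj
  have hPx' : qPochInf q (ω*x) ≠ 0 := by
    rw [show ω*x = x*ω from mul_comm ω x]; exact hPx
  have hyjq' : qPoch q (q^j*ω*y) m ≠ 0 := by
    rw [show q^j*ω*y = y*ω*q^j by ring]; exact hyjq
  have hcc : ∀ R : ℂ, t^(m+j) / qPoch q q (m+j) * (qPoch q q (m+j) / (qPoch q q j * qPoch q q m) * R)
      = t^(m+j) / (qPoch q q j * qPoch q q m) * R := by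
    intro R
    field_simp
  rw [hcc, hcau, hyP, hxP, Eyadd, hωk, CAux, vAux]
  field_simp
  have hωj : ω^j * (ω^j)⁻¹ = 1 := mul_inv_cancel₀ (pow_ne_zero j hω)
  rw [div_pow, div_eq_mul_inv (t ^ j)]
  linear_combination (-((t ^ (m + j) * ∏ i ∈ range j, (1 - q ^ (k - i))) * x ^ m *
    qPoch q (y / x) m * qPochInf q (y * ω))) * hωj

lemma hv_summable (hq1 : ‖q‖ < 1) (hxt : ‖x*t‖ < 1)
    (hyfac : ∀ m : ℕ, 1 - y*ω*q^m ≠ 0) (j : ℕ) :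
    Summable (fun m => ‖vAux q t x y ω j m‖) := by
  obtain ⟨δ1, hδ1pos, hδ1⟩ := qPoch_lower hq1 (qfac_ne hq1)
  obtain ⟨δ2, hδ2pos, hδ2⟩ := qPoch_lower hq1 (hyfacj_lemma hyfac j)
  set E := Real.exp (‖y/x‖ * (1-‖q‖)⁻¹) with hE
  have hEpos : 0 < E := Real.exp_pos _
  refine Summable.of_nonneg_of_le (fun m => norm_nonneg _) (fun m => ?_)
    ((summable_geometric_of_lt_one (norm_nonneg _) hxt).mul_left (E/(δ2*δ1)))
  rw [vAux, norm_div, norm_mul, norm_mul, norm_pow]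
  have h1 : ‖qPoch q (y/x) m‖ ≤ E := norm_qPoch_le hq1 _ m
  have h2 : δ2*δ1 ≤ ‖qPoch q (y*ω*q^j) m‖ * ‖qPoch q q m‖ :=
    mul_le_mul (hδ2 m) (hδ1 m) hδ1pos.le (norm_nonneg _)
  calc ‖qPoch q (y/x) m‖ * ‖x*t‖^m / (‖qPoch q (y*ω*q^j) m‖ * ‖qPoch q q m‖)
      ≤ E * ‖x*t‖^m / (δ2*δ1) := by
        refine div_le_div₀ (by positivity) ?_ (by positivity) h2
        exact mul_le_mul_of_nonneg_right h1 (pow_nonneg (norm_nonneg _) m)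
  _ = E/(δ2*δ1) * ‖x*t‖^m := by ring

lemma hu_norm_summable (hq0 : q ≠ 0) (hq1 : ‖q‖ < 1) (hω : ω ≠ 0) (hx : x ≠ 0)
    (hxω : ‖x*ω‖ < 1) (hxt : ‖x*t‖ < 1) (hyfac : ∀ m : ℕ, 1 - y*ω*q^m ≠ 0)
    {j : ℕ} (hj : j ≤ k) :
    Summable (fun n => ‖uAux q t x y ω k n j‖) := by
  rw [← summable_nat_add_iff j]
  have : (fun n => ‖uAux q t x y ω k (n+j) j‖)
      = fun n => ‖CAux q t x y ω k j‖ * ‖vAux q t x y ω j n‖ := by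
    funext n
    rw [hval_lemma hq0 hq1 hω hx hxω hyfac hj n, norm_mul]
  rw [this]
  exact (hv_summable hq1 hxt hyfac j).mul_left _

lemma hu_summable (hq0 : q ≠ 0) (hq1 : ‖q‖ < 1) (hω : ω ≠ 0) (hx : x ≠ 0)
    (hxω : ‖x*ω‖ < 1) (hxt : ‖x*t‖ < 1) (hyfac : ∀ m : ℕ, 1 - y*ω*q^m ≠ 0)
    {j : ℕ} (hj : j ≤ k) :
    Summable (fun n => uAux q t x y ω k n j) :=
  (hu_norm_summable hq0 hq1 hω hx hxω hxt hyfac hj).of_norm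

end MainLemmas2
end Stmt5Aux


open Stmt5Aux in
/-- Lemma 4.2, action of `T(tD_ω)` on `((yω;q)_∞/(xω;q)_∞)·ω^k`. -/
theorem stmt5 (q : ℂ) (hq0 : q ≠ 0) (hq1 : ‖q‖ < 1) (k : ℕ) (t x y ω : ℂ)
    (hω : ω ≠ 0) (hx : x ≠ 0) (hxω : ‖x * ω‖ < 1) (hxt : ‖x * t‖ < 1)
    (hyω : ∀ m : ℕ, y * ω * q ^ m ≠ 1) :
    Summable (fun n : ℕ => ‖t ^ n / qPoch q q n *
        ((Dq q)^[n] (fun w => qPochInf q (y * w) / qPochInf q (x * w) * w ^ k)) ω‖) ∧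
    ∑' n : ℕ, t ^ n / qPoch q q n *
        ((Dq q)^[n] (fun w => qPochInf q (y * w) / qPochInf q (x * w) * w ^ k)) ω =
      qPochInf q (y * ω) / qPochInf q (x * ω) * ω ^ k *
        ∑ j ∈ Finset.range (k + 1),
          (-1) ^ j * q ^ ((k * j : ℤ) - (j.choose 2 : ℤ)) *
            (qPoch q (q ^ (-(k : ℤ))) j * qPoch q (x * ω) j /
              (qPoch q (y * ω) j * qPoch q q j)) * (t / ω) ^ j *
            Phi21 q (y / x) 0 (y * ω * q ^ j) (x * t) := by
  have hyfac : ∀ m : ℕ, 1 - y*ω*q^m ≠ 0 := fun m => sub_ne_zero.2 (Ne.symm (hyω m))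
  have husum : ∀ j ∈ Finset.range (k+1), Summable (fun n => ‖uAux q t x y ω k n j‖) :=
    fun j hj => hu_norm_summable hq0 hq1 hω hx hxω hxt hyfac
      (by have := Finset.mem_range.1 hj; omega)
  have hsum1 : Summable (fun n => ∑ j ∈ Finset.range (k+1), ‖uAux q t x y ω k n j‖) :=
    summable_sum husum
  constructor
  · refine hsum1.of_nonneg_of_le (fun n => norm_nonneg _) (fun n => ?_)
    rw [hT_lemma hq0 hq1 hω hxω hyfac n]
    exact norm_sum_le _ _
  · rw [tsum_congr (hT_lemma hq0 hq1 hω hxω hyfac)]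
    rw [Summable.tsum_finsetSum (fun j hj => hu_summable hq0 hq1 hω hx hxω hxt hyfac
      (by have := Finset.mem_range.1 hj; omega : j ≤ k))]
    rw [Finset.mul_sum]
    refine Finset.sum_congr rfl fun j hj => ?_
    have hjk : j ≤ k := by have := Finset.mem_range.1 hj; omega
    have hus := hu_summable hq0 hq1 hω hx hxω hxt hyfac hjk
      (q := q) (t := t) (x := x) (y := y) (ω := ω) (k := k)
    have hsplit := (hus.sum_add_tsum_nat_add j).symm
    have hhead : ∑ i ∈ Finset.range j, uAux q t x y ω k i j = 0 :=
      Finset.sum_eq_zero fun i hi => by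
        rw [uAux, if_neg (by have := Finset.mem_range.1 hi; omega)]
    have hxfacω : ∀ i : ℕ, 1 - (x*ω)*q^i ≠ 0 := fac_ne_of_norm hq1 hxω
    have hPx : qPochInf q (x*ω) ≠ 0 := qPochInf_ne_zero hq1 hxfacω
    have hyj : qPoch q (y*ω) j ≠ 0 := qPoch_ne_zero hyfac _
    have hqqj := qPoch_q_ne_zero (q := q) hq1 j
    calc ∑' n, uAux q t x y ω k n j
        = (∑ i ∈ Finset.range j, uAux q t x y ω k i j) + ∑' m, uAux q t x y ω k (m+j) j :=
          hsplit
    _ = ∑' m, CAux q t x y ω k j * vAux q t x y ω j m := by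
        rw [hhead, zero_add]
        exact tsum_congr fun m => hval_lemma hq0 hq1 hω hx hxω hyfac hjk m
    _ = CAux q t x y ω k j * ∑' m, vAux q t x y ω j m := tsum_mul_left
    _ = CAux q t x y ω k j * Phi21 q (y/x) 0 (y*ω*q^j) (x*t) := by
        congr 1
        rw [Phi21]
        refine tsum_congr fun m => ?_
        rw [show qPoch q 0 m = 1 by simp [qPoch], vAux]
        ring
    _ = qPochInf q (y * ω) / qPochInf q (x * ω) * ω ^ k *
          ((-1) ^ j * q ^ ((k * j : ℤ) - (j.choose 2 : ℤ)) *
            (qPoch q (q ^ (-(k : ℤ))) j * qPoch q (x * ω) j /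
              (qPoch q (y * ω) j * qPoch q q j)) * (t / ω) ^ j *
            Phi21 q (y / x) 0 (y * ω * q ^ j) (x * t)) := by
        rw [CAux, coeff_id hq0 k j hjk]
        field_simp

end
end

section
/- Let σ, x, u, v, t ∈ ℂ with u ≠ 0, |ut| < 1, |uxt| < 1, and v t q^m ≠ 1 for all integers m ≥ 0. Then the series ∑_{n=0}^∞ φ_n^{(σ)}(x|q) · p_n(u,v) · t^n/(q;q)_n converges absolutely and its sum equals ((vt;q)_∞/(ut;q)_∞) · ₂Φ₁[v/u, σ; vt; q; uxt]. -/
noncomputable section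

open Finset Filter Topology

namespace S10

lemma one_sub_sum_le_prod (s : Finset ℕ) (a : ℕ → ℝ) (h0 : ∀ i, 0 ≤ a i) (h1 : ∀ i, a i ≤ 1) :
    1 - ∑ i ∈ s, a i ≤ ∏ i ∈ s, (1 - a i) := by
  classical
  induction s using Finset.cons_induction with
  | empty => simp
  | cons i s hi ih =>
    rw [Finset.prod_cons, Finset.sum_cons]
    have hs0 : (0:ℝ) ≤ ∑ j ∈ s, a j := Finset.sum_nonneg fun j _ => h0 j
    have h1i : (0:ℝ) ≤ 1 - a i := by linarith [h1 i]
    nlinarith [mul_le_mul_of_nonneg_left ih h1i, mul_nonneg (h0 i) hs0]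

lemma exists_lb (a : ℕ → ℝ) (h0 : ∀ j, 0 ≤ a j) (h1 : ∀ j, a j < 1) (hs : Summable a) :
    ∃ c : ℝ, 0 < c ∧ ∀ n, c ≤ ∏ j ∈ Finset.range n, (1 - a j) := by
  have htail : Tendsto (fun i => ∑' k, a (k + i)) atTop (𝓝 0) := tendsto_sum_nat_add a
  have hev : ∀ᶠ i in atTop, ∑' k, a (k + i) ≤ 1/2 :=
    htail.eventually (eventually_le_nhds (by norm_num : (0:ℝ) < 1/2))
  obtain ⟨J, hJ⟩ := eventually_atTop.mp hev
  have hJ2 : ∑' k, a (k + J) ≤ 1/2 := hJ J le_rfl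
  have hpos : ∀ j, (0:ℝ) < 1 - a j := fun j => by linarith [h1 j]
  have hPpos : 0 < ∏ j ∈ Finset.range J, (1 - a j) := Finset.prod_pos fun j _ => hpos j
  refine ⟨(∏ j ∈ Finset.range J, (1 - a j)) * (1/2), by positivity, fun n => ?_⟩
  rcases le_or_gt n J with h | h
  · have hsplit : (∏ j ∈ Finset.range n, (1 - a j)) * ∏ j ∈ Finset.Ico n J, (1 - a j)
        = ∏ j ∈ Finset.range J, (1 - a j) := Finset.prod_range_mul_prod_Ico _ h
    have h1' : ∏ j ∈ Finset.Ico n J, (1 - a j) ≤ 1 :=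
      Finset.prod_le_one (fun j _ => (hpos j).le) (fun j _ => by linarith [h0 j])
    have hn : 0 < ∏ j ∈ Finset.range n, (1 - a j) := Finset.prod_pos fun j _ => hpos j
    nlinarith
  · have hsplit : (∏ j ∈ Finset.range J, (1 - a j)) * ∏ j ∈ Finset.Ico J n, (1 - a j)
        = ∏ j ∈ Finset.range n, (1 - a j) := Finset.prod_range_mul_prod_Ico _ h.le
    have hsum : ∑ j ∈ Finset.Ico J n, a j ≤ 1/2 := by
      rw [Finset.sum_Ico_eq_sum_range]
      refine le_trans ?_ hJ2
      have := Summable.sum_le_tsum (Finset.range (n - J)) (fun i _ => h0 (i + J))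
        ((summable_nat_add_iff J).mpr hs)
      refine le_trans (le_of_eq ?_) this
      exact Finset.sum_congr rfl fun i _ => by rw [Nat.add_comm]
    have hW : 1 - ∑ j ∈ Finset.Ico J n, a j ≤ ∏ j ∈ Finset.Ico J n, (1 - a j) :=
      one_sub_sum_le_prod _ a h0 (fun i => (h1 i).le)
    have : (1:ℝ)/2 ≤ ∏ j ∈ Finset.Ico J n, (1 - a j) := by linarith
    calc (∏ j ∈ Finset.range J, (1 - a j)) * (1/2)
        ≤ (∏ j ∈ Finset.range J, (1 - a j)) * ∏ j ∈ Finset.Ico J n, (1 - a j) := by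
          exact mul_le_mul_of_nonneg_left this hPpos.le
      _ = _ := hsplit

variable {q : ℂ}

lemma norm_one_sub_ge (b : ℂ) (j : ℕ) : 1 - ‖b‖ * ‖q‖ ^ j ≤ ‖1 - b * q ^ j‖ := by
  have := norm_sub_norm_le (1 : ℂ) (b * q ^ j)
  simpa [norm_mul, norm_pow] using this

lemma qPoch_lb (hq1 : ‖q‖ < 1) (b : ℂ) (hb : ‖b‖ < 1) :
    ∃ c : ℝ, 0 < c ∧ ∀ n, c ≤ ‖qPoch q b n‖ := by
  have h0 : ∀ j : ℕ, 0 ≤ ‖b‖ * ‖q‖ ^ j := fun j => by positivity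
  have h1 : ∀ j : ℕ, ‖b‖ * ‖q‖ ^ j < 1 := fun j => by
    calc ‖b‖ * ‖q‖ ^ j ≤ ‖b‖ * 1 := by
          exact mul_le_mul_of_nonneg_left (pow_le_one₀ (norm_nonneg q) hq1.le) (norm_nonneg b)
      _ < 1 := by simpa using hb
  have hs : Summable (fun j : ℕ => ‖b‖ * ‖q‖ ^ j) :=
    (summable_geometric_of_lt_one (norm_nonneg q) hq1).mul_left _
  obtain ⟨c, hc, hcn⟩ := exists_lb _ h0 h1 hs
  refine ⟨c, hc, fun n => (hcn n).trans ?_⟩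
  rw [qPoch, norm_prod]
  exact Finset.prod_le_prod (fun j _ => by linarith [h1 j]) (fun j _ => norm_one_sub_ge b j)

lemma qPoch_ub (hq1 : ‖q‖ < 1) (b : ℂ) (n : ℕ) :
    ‖qPoch q b n‖ ≤ Real.exp (‖b‖ / (1 - ‖q‖)) := by
  have h1q : (0:ℝ) < 1 - ‖q‖ := by linarith
  rw [qPoch, norm_prod]
  calc ∏ j ∈ Finset.range n, ‖1 - b * q ^ j‖
      ≤ ∏ j ∈ Finset.range n, Real.exp (‖b‖ * ‖q‖ ^ j) := by
        refine Finset.prod_le_prod (fun j _ => norm_nonneg _) (fun j _ => ?_)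
        calc ‖1 - b * q ^ j‖ ≤ ‖(1:ℂ)‖ + ‖b * q ^ j‖ := norm_sub_le _ _
          _ = ‖b‖ * ‖q‖ ^ j + 1 := by simp [norm_mul, norm_pow]; ring
          _ ≤ Real.exp (‖b‖ * ‖q‖ ^ j) := Real.add_one_le_exp _
    _ = Real.exp (∑ j ∈ Finset.range n, ‖b‖ * ‖q‖ ^ j) := (Real.exp_sum _ _).symm
    _ ≤ Real.exp (‖b‖ / (1 - ‖q‖)) := by
        apply Real.exp_le_exp.mpr
        calc ∑ j ∈ Finset.range n, ‖b‖ * ‖q‖ ^ j = ‖b‖ * ∑ j ∈ Finset.range n, ‖q‖ ^ j := by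
              rw [Finset.mul_sum]
          _ ≤ ‖b‖ * (1 - ‖q‖)⁻¹ := by
              refine mul_le_mul_of_nonneg_left ?_ (norm_nonneg b)
              rw [← tsum_geometric_of_lt_one (norm_nonneg q) hq1]
              exact Summable.sum_le_tsum _ (fun i _ => by positivity)
                (summable_geometric_of_lt_one (norm_nonneg q) hq1)
          _ = ‖b‖ / (1 - ‖q‖) := (div_eq_mul_inv _ _).symm

lemma mult (hq1 : ‖q‖ < 1) (b : ℂ) (hb : ∀ j : ℕ, 1 - b * q ^ j ≠ 0) :
    Multipliable (fun j : ℕ => 1 - b * q ^ j) := by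
  apply Complex.multipliable_of_summable_log
  have h0 : Tendsto (fun j : ℕ => ‖b‖ * ‖q‖ ^ j) atTop (𝓝 (‖b‖ * 0)) :=
    (tendsto_pow_atTop_nhds_zero_of_lt_one (norm_nonneg q) hq1).const_mul _
  rw [mul_zero] at h0
  have hev : ∀ᶠ j in atTop, ‖b‖ * ‖q‖ ^ j ≤ 1/2 :=
    h0.eventually (eventually_le_nhds (by norm_num : (0:ℝ) < 1/2))
  obtain ⟨J, hJ⟩ := eventually_atTop.mp hev
  rw [← summable_nat_add_iff J]
  apply Summable.of_norm_bounded (g := fun j => 3/2 * (‖b‖ * ‖q‖ ^ (j + J)))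
  · apply Summable.mul_left
    apply Summable.mul_left
    exact (summable_nat_add_iff J).mpr (summable_geometric_of_lt_one (norm_nonneg q) hq1)
  · intro j
    have hsmall : ‖-(b * q ^ (j + J))‖ ≤ 1/2 := by
      rw [norm_neg, norm_mul, norm_pow]
      exact hJ (j + J) (Nat.le_add_left _ _)
    have := Complex.norm_log_one_add_half_le_self hsmall
    rw [show (1 : ℂ) + -(b * q ^ (j + J)) = 1 - b * q ^ (j + J) by ring] at this
    calc ‖Complex.log (1 - b * q ^ (j + J))‖ ≤ 3/2 * ‖-(b * q ^ (j + J))‖ := this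
      _ = 3/2 * (‖b‖ * ‖q‖ ^ (j + J)) := by rw [norm_neg, norm_mul, norm_pow]

lemma tendsto_qPoch (hq1 : ‖q‖ < 1) (b : ℂ) (hb : ∀ j : ℕ, 1 - b * q ^ j ≠ 0) :
    Tendsto (fun n => qPoch q b n) atTop (𝓝 (qPochInf q b)) :=
  (mult hq1 b hb).hasProd.tendsto_prod_nat

lemma factors_ne (hq1 : ‖q‖ < 1) (b : ℂ) (hb : ‖b‖ < 1) (j : ℕ) : 1 - b * q ^ j ≠ 0 := by
  have : ‖b * q ^ j‖ < 1 := by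
    rw [norm_mul, norm_pow]
    calc ‖b‖ * ‖q‖ ^ j ≤ ‖b‖ * 1 :=
          mul_le_mul_of_nonneg_left (pow_le_one₀ (norm_nonneg q) hq1.le) (norm_nonneg b)
      _ < 1 := by simpa using hb
  intro h
  have hb1 : b * q ^ j = 1 := by linear_combination -h
  rw [hb1, norm_one] at this
  exact lt_irrefl _ this

lemma qPochInf_lb (hq1 : ‖q‖ < 1) (b : ℂ) (hb : ‖b‖ < 1) :
    ∃ c : ℝ, 0 < c ∧ c ≤ ‖qPochInf q b‖ := by
  obtain ⟨c, hc, hcn⟩ := qPoch_lb hq1 b hb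
  refine ⟨c, hc, ?_⟩
  have ht := (tendsto_qPoch hq1 b (factors_ne hq1 b hb)).norm
  exact ge_of_tendsto' ht hcn

lemma qPochInf_ne_zero (hq1 : ‖q‖ < 1) (b : ℂ) (hb : ‖b‖ < 1) : qPochInf q b ≠ 0 := by
  obtain ⟨c, hc, hle⟩ := qPochInf_lb hq1 b hb
  intro h
  rw [h, norm_zero] at hle
  linarith

lemma qPochInf_shift (hq1 : ‖q‖ < 1) (w : ℂ) (k : ℕ) (hw : ∀ j : ℕ, 1 - w * q ^ j ≠ 0) :
    qPoch q w k * qPochInf q (q ^ k * w) = qPochInf q w := by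
  have hw' : ∀ j : ℕ, 1 - q ^ k * w * q ^ j ≠ 0 := fun j => by
    have h2 := hw (k + j)
    rw [pow_add] at h2
    convert h2 using 2
    ring
  have h1 : Tendsto (fun n => qPoch q w (n + k)) atTop (𝓝 (qPochInf q w)) :=
    (tendsto_qPoch hq1 w hw).comp (tendsto_add_atTop_nat k)
  have h2 : Tendsto (fun n => qPoch q w k * qPoch q (q ^ k * w) n) atTop
      (𝓝 (qPoch q w k * qPochInf q (q ^ k * w))) :=
    ((tendsto_qPoch hq1 _ hw').const_mul _)
  have heq : ∀ n, qPoch q w (n + k) = qPoch q w k * qPoch q (q ^ k * w) n := by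
    intro n
    rw [add_comm, qPoch, qPoch, qPoch, Finset.prod_range_add]
    congr 1
    refine Finset.prod_congr rfl fun i _ => ?_
    rw [pow_add]
    ring
  exact (tendsto_nhds_unique (h1.congr fun n => heq n) h2).symm

set_option maxHeartbeats 2000000 in
lemma qbinom (hq1 : ‖q‖ < 1) (a z : ℂ) (hz : ‖z‖ < 1)
    (hne : ∀ j : ℕ, 1 - a * z * q ^ j ≠ 0) :
    HasSum (fun m => qPoch q a m * z ^ m / qPoch q q m)
      (qPochInf q (a * z) / qPochInf q z) := by
  have h1q : (0:ℝ) < 1 - ‖q‖ := by linarith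
  obtain ⟨c0, hc0, hc0n⟩ := qPoch_lb hq1 q hq1
  have hqq_ne : ∀ n, qPoch q q n ≠ 0 := by
    intro n h
    have := hc0n n
    rw [h, norm_zero] at this
    linarith
  set Ca : ℝ := Real.exp (‖a‖ / (1 - ‖q‖)) with hCadef
  have hCapos : 0 < Ca := Real.exp_pos _
  set c : ℕ → ℂ := fun m => qPoch q a m / qPoch q q m with hc
  have hcb : ∀ m, ‖c m‖ ≤ Ca / c0 := by
    intro m
    rw [hc]
    simp only [norm_div]
    exact div_le_div₀ hCapos.le (qPoch_ub hq1 a m) hc0 (hc0n m)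
  have hsum : ∀ w : ℂ, ‖w‖ < 1 → Summable (fun m => c m * w ^ m) := by
    intro w hw
    apply Summable.of_norm_bounded (g := fun m => (Ca / c0) * ‖w‖ ^ m)
    · exact (summable_geometric_of_lt_one (norm_nonneg w) hw).mul_left _
    · intro m
      rw [norm_mul, norm_pow]
      exact mul_le_mul_of_nonneg_right (hcb m) (by positivity)
  set f : ℂ → ℂ := fun w => ∑' m, c m * w ^ m with hf
  have hc00 : c 0 = 1 := by simp [hc, qPoch]
  have hrec : ∀ m, c (m + 1) * (1 - q ^ (m + 1)) = c m * (1 - a * q ^ m) := by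
    intro m
    have e1 : qPoch q a (m + 1) = qPoch q a m * (1 - a * q ^ m) := Finset.prod_range_succ _ _
    have e2 : qPoch q q (m + 1) = qPoch q q m * (1 - q ^ (m + 1)) := by
      rw [qPoch, Finset.prod_range_succ, ← qPoch, pow_succ']
    have h1 : qPoch q q m ≠ 0 := hqq_ne m
    have h2 : (1 : ℂ) - q ^ (m + 1) ≠ 0 := by
      have h3 := hqq_ne (m + 1)
      rw [e2] at h3
      exact right_ne_zero_of_mul h3
    rw [hc]
    simp only
    rw [e1, e2]
    field_simp
  have hfe : ∀ w : ℂ, ‖w‖ < 1 → (1 - w) * f w = (1 - a * w) * f (q * w) := by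
    intro w hw
    have hqw : ‖q * w‖ < 1 := by
      rw [norm_mul]
      calc ‖q‖ * ‖w‖ ≤ 1 * ‖w‖ := mul_le_mul_of_nonneg_right hq1.le (norm_nonneg w)
        _ < 1 := by simpa using hw
    have h1 : HasSum (fun m => c m * w ^ m) (f w) := (hsum w hw).hasSum
    have h2 : HasSum (fun m => c m * (q * w) ^ m) (f (q * w)) := (hsum _ hqw).hasSum
    set g : ℕ → ℂ := fun m => if m = 0 then 0 else w * (c (m - 1) * w ^ (m - 1)) with hg
    set g2 : ℕ → ℂ := fun m => if m = 0 then 0 else w * (c (m - 1) * (q * w) ^ (m - 1)) with hg2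
    have hG : HasSum g (w * f w) := by
      have hB : HasSum (fun n => g (n + 1)) (w * f w) := by
        have hfun : (fun n => g (n + 1)) = fun n => w * (c n * w ^ n) := by
          funext n; simp [hg]
        rw [hfun]
        exact h1.mul_left w
      have := (hasSum_nat_add_iff (f := g) 1).mp hB
      simpa [hg] using this
    have hG2 : HasSum g2 (w * f (q * w)) := by
      have hB : HasSum (fun n => g2 (n + 1)) (w * f (q * w)) := by
        have hfun : (fun n => g2 (n + 1)) = fun n => w * (c n * (q * w) ^ n) := by
          funext n; simp [hg2]
        rw [hfun]
        exact h2.mul_left w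
      have := (hasSum_nat_add_iff (f := g2) 1).mp hB
      simpa [hg2] using this
    have hcomb : HasSum (fun m => (c m * w ^ m - g m) - (c m * (q * w) ^ m - a * g2 m))
        ((f w - w * f w) - (f (q * w) - a * (w * f (q * w)))) :=
      (h1.sub hG).sub (h2.sub (hG2.mul_left a))
    have hzero : (fun m => (c m * w ^ m - g m) - (c m * (q * w) ^ m - a * g2 m))
        = fun _ => (0 : ℂ) := by
      funext m
      cases m with
      | zero => simp [hg, hg2]
      | succ n =>
        simp only [hg, hg2, if_neg (Nat.succ_ne_zero n), Nat.add_sub_cancel]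
        linear_combination w ^ (n + 1) * hrec n
    rw [hzero] at hcomb
    have h0 : (f w - w * f w) - (f (q * w) - a * (w * f (q * w))) = 0 :=
      hcomb.unique hasSum_zero
    linear_combination h0
  have hiter : ∀ N : ℕ, (∏ j ∈ Finset.range N, (1 - z * q ^ j)) * f z
      = (∏ j ∈ Finset.range N, (1 - a * z * q ^ j)) * f (q ^ N * z) := by
    intro N
    induction N with
    | zero => simp
    | succ N ih =>
      have hNz : ‖q ^ N * z‖ < 1 := by
        rw [norm_mul, norm_pow]
        calc ‖q‖ ^ N * ‖z‖ ≤ 1 * ‖z‖ :=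
              mul_le_mul_of_nonneg_right (pow_le_one₀ (norm_nonneg q) hq1.le) (norm_nonneg z)
          _ < 1 := by simpa using hz
      have hstep := hfe (q ^ N * z) hNz
      rw [Finset.prod_range_succ, Finset.prod_range_succ]
      have harg : q * (q ^ N * z) = q ^ (N + 1) * z := by ring
      calc (∏ j ∈ Finset.range N, (1 - z * q ^ j)) * (1 - z * q ^ N) * f z
          = (1 - q ^ N * z) * ((∏ j ∈ Finset.range N, (1 - z * q ^ j)) * f z) := by ring
        _ = (1 - q ^ N * z) *
            ((∏ j ∈ Finset.range N, (1 - a * z * q ^ j)) * f (q ^ N * z)) := by rw [ih]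
        _ = (∏ j ∈ Finset.range N, (1 - a * z * q ^ j)) *
            ((1 - q ^ N * z) * f (q ^ N * z)) := by ring
        _ = (∏ j ∈ Finset.range N, (1 - a * z * q ^ j)) *
            ((1 - a * (q ^ N * z)) * f (q * (q ^ N * z))) := by rw [hstep]
        _ = (∏ j ∈ Finset.range N, (1 - a * z * q ^ j)) * (1 - a * z * q ^ N) *
            f (q ^ (N + 1) * z) := by rw [harg]; ring
  have hfz : ∀ j : ℕ, 1 - z * q ^ j ≠ 0 := factors_ne hq1 z hz
  have hP : Tendsto (fun N => (∏ j ∈ Finset.range N, (1 - z * q ^ j)) * f z) atTop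
      (𝓝 (qPochInf q z * f z)) := (tendsto_qPoch hq1 z hfz).mul_const _
  have hQ : Tendsto (fun N => ∏ j ∈ Finset.range N, (1 - a * z * q ^ j)) atTop
      (𝓝 (qPochInf q (a * z))) := tendsto_qPoch hq1 (a * z) hne
  have hKlim : Tendsto (fun N => f (q ^ N * z)) atTop (𝓝 1) := by
    set K : ℝ := (Ca / c0) / (1 - ‖z‖) with hKdef
    have hKpos : 0 ≤ K := div_nonneg (div_nonneg hCapos.le hc0.le) (by linarith)
    have hbound : ∀ w : ℂ, ‖w‖ ≤ ‖z‖ → ‖f w - 1‖ ≤ K * ‖w‖ := by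
      intro w hw
      have hw1 : ‖w‖ < 1 := lt_of_le_of_lt hw hz
      have hsw := hsum w hw1
      have htsum0 : f w = c 0 * w ^ 0 + ∑' m, c (m + 1) * w ^ (m + 1) := Summable.tsum_eq_zero_add hsw
      have hfw1 : f w - 1 = ∑' m, c (m + 1) * w ^ (m + 1) := by
        rw [htsum0, hc00]; simp
      rw [hfw1]
      have hs2 : Summable (fun m : ℕ => (Ca / c0) * ‖w‖ ^ (m + 1)) :=
        (summable_nat_add_iff 1).mpr
          ((summable_geometric_of_lt_one (norm_nonneg w) hw1).mul_left (Ca / c0))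
      have hb2 : ∀ m : ℕ, ‖c (m + 1) * w ^ (m + 1)‖ ≤ (Ca / c0) * ‖w‖ ^ (m + 1) := by
        intro m
        rw [norm_mul, norm_pow]
        exact mul_le_mul_of_nonneg_right (hcb (m + 1)) (by positivity)
      have hsn : Summable (fun m => ‖c (m + 1) * w ^ (m + 1)‖) :=
        Summable.of_nonneg_of_le (fun m => norm_nonneg _) hb2 hs2
      calc ‖∑' m, c (m + 1) * w ^ (m + 1)‖ ≤ ∑' m, ‖c (m + 1) * w ^ (m + 1)‖ :=
            norm_tsum_le_tsum_norm hsn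
        _ ≤ ∑' m : ℕ, (Ca / c0) * ‖w‖ ^ (m + 1) := Summable.tsum_le_tsum hb2 hsn hs2
        _ = (Ca / c0) * ‖w‖ * ∑' m : ℕ, ‖w‖ ^ m := by
            rw [← tsum_mul_left]
            exact tsum_congr fun m => by ring
        _ = (Ca / c0) * ‖w‖ * (1 - ‖w‖)⁻¹ := by
            rw [tsum_geometric_of_lt_one (norm_nonneg w) hw1]
        _ ≤ K * ‖w‖ := by
            have hinv : (1 - ‖w‖)⁻¹ ≤ (1 - ‖z‖)⁻¹ :=
              inv_anti₀ (by linarith) (by linarith)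
            calc (Ca / c0) * ‖w‖ * (1 - ‖w‖)⁻¹ ≤ (Ca / c0) * ‖w‖ * (1 - ‖z‖)⁻¹ :=
                  mul_le_mul_of_nonneg_left hinv
                    (mul_nonneg (div_nonneg hCapos.le hc0.le) (norm_nonneg w))
              _ = K * ‖w‖ := by rw [hKdef]; ring
    have h0 : Tendsto (fun N : ℕ => K * (‖z‖ * ‖q‖ ^ N)) atTop (𝓝 0) := by
      have := ((tendsto_pow_atTop_nhds_zero_of_lt_one (norm_nonneg q) hq1).const_mul
        ‖z‖).const_mul K
      simpa using this
    have hb3 : ∀ N : ℕ, ‖f (q ^ N * z) - 1‖ ≤ K * (‖z‖ * ‖q‖ ^ N) := by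
      intro N
      have hle : ‖q ^ N * z‖ ≤ ‖z‖ := by
        rw [norm_mul, norm_pow]
        exact mul_le_of_le_one_left (norm_nonneg z)
          (pow_le_one₀ (norm_nonneg q) hq1.le)
      have := hbound _ hle
      calc ‖f (q ^ N * z) - 1‖ ≤ K * ‖q ^ N * z‖ := this
        _ = K * (‖z‖ * ‖q‖ ^ N) := by rw [norm_mul, norm_pow]; ring
    have : Tendsto (fun N : ℕ => f (q ^ N * z) - 1) atTop (𝓝 0) :=
      squeeze_zero_norm hb3 h0
    have h4 := this.add_const 1
    simpa using h4
  have hlim2 : Tendsto (fun N => (∏ j ∈ Finset.range N, (1 - a * z * q ^ j)) * f (q ^ N * z))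
      atTop (𝓝 (qPochInf q (a * z) * 1)) := hQ.mul hKlim
  have heq : qPochInf q z * f z = qPochInf q (a * z) := by
    have huniq := tendsto_nhds_unique (hP.congr hiter) hlim2
    simpa using huniq
  have hz0 : qPochInf q z ≠ 0 := qPochInf_ne_zero hq1 z hz
  have hfzval : f z = qPochInf q (a * z) / qPochInf q z := by
    field_simp
    linear_combination heq
  have hhs : HasSum (fun m => c m * z ^ m) (f z) := (hsum z hz).hasSum
  rw [hfzval] at hhs
  have hfun : (fun m => qPoch q a m * z ^ m / qPoch q q m) = fun m => c m * z ^ m := by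
    funext m
    rw [hc]
    simp only
    rw [div_mul_eq_mul_div]
  rw [hfun]
  exact hhs

end S10


set_option maxHeartbeats 4000000 in
/-- Srivastava–Agarwal type generating function with Cauchy polynomials. -/
theorem stmt10 (q : ℂ) (hq0 : q ≠ 0) (hq1 : ‖q‖ < 1) (σ x u v t : ℂ) (hu : u ≠ 0)
    (hut : ‖u * t‖ < 1) (huxt : ‖u * x * t‖ < 1)
    (hvt : ∀ m : ℕ, v * t * q ^ m ≠ 1) :
    Summable (fun n : ℕ => ‖hahnPhi q σ x n * cauchyP q u v n * t ^ n / qPoch q q n‖) ∧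
    ∑' n : ℕ, hahnPhi q σ x n * cauchyP q u v n * t ^ n / qPoch q q n =
      qPochInf q (v * t) / qPochInf q (u * t) * Phi21 q (v / u) σ (v * t) (u * x * t) := by
  classical
  have h1q : (0:ℝ) < 1 - ‖q‖ := by linarith
  obtain ⟨c0, hc0, hc0n⟩ := S10.qPoch_lb hq1 q hq1
  have hqq_ne : ∀ n, qPoch q q n ≠ 0 := by
    intro n h
    have := hc0n n
    rw [h, norm_zero] at this
    linarith
  set Cs : ℝ := Real.exp (‖σ‖ / (1 - ‖q‖)) with hCs
  set Cv : ℝ := Real.exp (‖v / u‖ / (1 - ‖q‖)) with hCv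
  have hCspos : 0 < Cs := Real.exp_pos _
  have hCvpos : 0 < Cv := Real.exp_pos _
  set cA : ℕ → ℂ := fun k => qPoch q σ k * x ^ k * cauchyP q u v k * t ^ k / qPoch q q k
    with hcA
  set cB : ℕ → ℕ → ℂ := fun k m => qPoch q (q ^ k * (v / u)) m * (u * t) ^ m / qPoch q q m
    with hcB
  set F : ℕ × ℕ → ℂ := fun p => cA p.1 * cB p.1 p.2 with hFdef
  -- splitting of the Cauchy polynomials
  have hsplit : ∀ k m : ℕ, cauchyP q u v (k + m)
      = cauchyP q u v k * (u ^ m * qPoch q (q ^ k * (v / u)) m) := by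
    intro k m
    rw [cauchyP, cauchyP, qPoch, Finset.prod_range_add]
    congr 1
    calc ∏ i ∈ Finset.range m, (u - q ^ (k + i) * v)
        = ∏ i ∈ Finset.range m, (u * (1 - q ^ k * (v / u) * q ^ i)) := by
          refine Finset.prod_congr rfl fun i _ => ?_
          field_simp
          ring
      _ = u ^ m * ∏ i ∈ Finset.range m, (1 - q ^ k * (v / u) * q ^ i) := by
          rw [Finset.prod_mul_distrib, Finset.prod_const, Finset.card_range]
  have hcau : ∀ m : ℕ, cauchyP q u v m = u ^ m * qPoch q (v / u) m := by
    intro m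
    have := hsplit 0 m
    simpa [cauchyP, qPoch] using this
  -- norm bounds
  have hcaub : ∀ k, ‖cauchyP q u v k‖ ≤ ‖u‖ ^ k * Cv := by
    intro k
    rw [hcau k, norm_mul, norm_pow]
    exact mul_le_mul_of_nonneg_left (S10.qPoch_ub hq1 _ k) (by positivity)
  have hbB' : ∀ k m, ‖qPoch q (q ^ k * (v / u)) m‖ ≤ Cv := by
    intro k m
    refine (S10.qPoch_ub hq1 _ m).trans ?_
    rw [hCv]
    apply Real.exp_le_exp.mpr
    have hnum : ‖q ^ k * (v / u)‖ ≤ ‖v / u‖ := by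
      rw [norm_mul, norm_pow]
      exact mul_le_of_le_one_left (norm_nonneg _) (pow_le_one₀ (norm_nonneg q) hq1.le)
    have := mul_le_mul_of_nonneg_right hnum (inv_nonneg.mpr h1q.le)
    simpa [div_eq_mul_inv] using this
  have hbA : ∀ k, ‖cA k‖ ≤ (Cs * Cv / c0) * ‖u * x * t‖ ^ k := by
    intro k
    have hAeq : ‖cA k‖
        = ‖qPoch q σ k‖ * ‖x‖ ^ k * ‖cauchyP q u v k‖ * ‖t‖ ^ k / ‖qPoch q q k‖ := by
      rw [hcA]
      simp only [norm_div, norm_mul, norm_pow]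
    rw [hAeq]
    have t1 : ‖qPoch q σ k‖ * ‖x‖ ^ k ≤ Cs * ‖x‖ ^ k :=
      mul_le_mul_of_nonneg_right (S10.qPoch_ub hq1 σ k) (by positivity)
    have t2 : ‖cauchyP q u v k‖ * ‖t‖ ^ k ≤ ‖u‖ ^ k * Cv * ‖t‖ ^ k :=
      mul_le_mul_of_nonneg_right (hcaub k) (by positivity)
    have hnum : ‖qPoch q σ k‖ * ‖x‖ ^ k * ‖cauchyP q u v k‖ * ‖t‖ ^ k
        ≤ Cs * ‖x‖ ^ k * (‖u‖ ^ k * Cv) * ‖t‖ ^ k := by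
      calc ‖qPoch q σ k‖ * ‖x‖ ^ k * ‖cauchyP q u v k‖ * ‖t‖ ^ k
          = (‖qPoch q σ k‖ * ‖x‖ ^ k) * (‖cauchyP q u v k‖ * ‖t‖ ^ k) := by ring
        _ ≤ (Cs * ‖x‖ ^ k) * (‖u‖ ^ k * Cv * ‖t‖ ^ k) :=
            mul_le_mul t1 t2 (by positivity) (le_trans (by positivity) t1)
        _ = Cs * ‖x‖ ^ k * (‖u‖ ^ k * Cv) * ‖t‖ ^ k := by ring
    calc ‖qPoch q σ k‖ * ‖x‖ ^ k * ‖cauchyP q u v k‖ * ‖t‖ ^ k / ‖qPoch q q k‖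
        ≤ Cs * ‖x‖ ^ k * (‖u‖ ^ k * Cv) * ‖t‖ ^ k / c0 :=
          div_le_div₀ (by positivity) hnum hc0 (hc0n k)
      _ = (Cs * Cv / c0) * ‖u * x * t‖ ^ k := by
          rw [norm_mul, norm_mul, mul_pow, mul_pow]
          ring
  have hbB : ∀ k m, ‖cB k m‖ ≤ (Cv / c0) * ‖u * t‖ ^ m := by
    intro k m
    have hBeq : ‖cB k m‖ = ‖qPoch q (q ^ k * (v / u)) m‖ * ‖u * t‖ ^ m / ‖qPoch q q m‖ := by
      rw [hcB]
      simp only [norm_div, norm_mul, norm_pow]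
    rw [hBeq]
    calc ‖qPoch q (q ^ k * (v / u)) m‖ * ‖u * t‖ ^ m / ‖qPoch q q m‖
        ≤ Cv * ‖u * t‖ ^ m / c0 :=
          div_le_div₀ (by positivity)
            (mul_le_mul_of_nonneg_right (hbB' k m) (by positivity)) hc0 (hc0n m)
      _ = (Cv / c0) * ‖u * t‖ ^ m := by ring
  -- summability of F
  have hgeo1 : Summable (fun k : ℕ => (Cs * Cv / c0) * ‖u * x * t‖ ^ k) :=
    (summable_geometric_of_lt_one (norm_nonneg _) huxt).mul_left _
  have hgeo2 : Summable (fun m : ℕ => (Cv / c0) * ‖u * t‖ ^ m) :=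
    (summable_geometric_of_lt_one (norm_nonneg _) hut).mul_left _
  have hFs : Summable (fun p : ℕ × ℕ => ‖F p‖) := by
    refine Summable.of_nonneg_of_le (fun p => norm_nonneg _) (fun p => ?_)
      (hgeo1.mul_of_nonneg hgeo2
        (fun k => mul_nonneg (div_nonneg (mul_nonneg hCspos.le hCvpos.le) hc0.le)
          (pow_nonneg (norm_nonneg _) _))
        (fun m => mul_nonneg (div_nonneg hCvpos.le hc0.le) (pow_nonneg (norm_nonneg _) _)))
    have hFnorm : ‖F p‖ = ‖cA p.1‖ * ‖cB p.1 p.2‖ := by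
      rw [hFdef]
      exact norm_mul _ _
    rw [hFnorm]
    exact mul_le_mul (hbA p.1) (hbB p.1 p.2) (norm_nonneg _)
      (le_trans (norm_nonneg _) (hbA p.1))
  have hFsum : Summable F := hFs.of_norm
  -- term identity
  have hterm : ∀ n, hahnPhi q σ x n * cauchyP q u v n * t ^ n / qPoch q q n
      = ∑ kl ∈ Finset.HasAntidiagonal.antidiagonal n, F kl := by
    intro n
    rw [Finset.Nat.sum_antidiagonal_eq_sum_range_succ_mk]
    rw [hahnPhi, Finset.sum_mul, Finset.sum_mul, Finset.sum_div]
    refine Finset.sum_congr rfl fun k hk => ?_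
    have hkn : k ≤ n := Nat.lt_succ_iff.mp (Finset.mem_range.mp hk)
    obtain ⟨m, rfl⟩ : ∃ m, n = k + m := ⟨n - k, (Nat.add_sub_cancel' hkn).symm⟩
    have hmk : k + m - k = m := by omega
    rw [hmk, hFdef]
    simp only [hcA, hcB]
    rw [qBinom, hmk, hsplit k m, pow_add, mul_pow]
    have h1 := hqq_ne k
    have h2 := hqq_ne m
    have h3 := hqq_ne (k + m)
    field_simp
  -- summability over the sigma type
  have hsigN : Summable (fun y : Σ n : ℕ, Finset.HasAntidiagonal.antidiagonal n => ‖F y.2‖) := by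
    have := (Finset.HasAntidiagonal.sigmaAntidiagonalEquivProd (A := ℕ)).summable_iff.mpr hFs
    exact this
  have hfib : ∀ n : ℕ, HasSum (fun kl : Finset.HasAntidiagonal.antidiagonal n => ‖F kl‖)
      (∑ kl ∈ Finset.HasAntidiagonal.antidiagonal n, ‖F kl‖) := by
    intro n
    rw [← Finset.sum_coe_sort]
    exact hasSum_fintype _
  have hsumInner : Summable (fun n => ∑ kl ∈ Finset.HasAntidiagonal.antidiagonal n, ‖F kl‖) :=
    ⟨_, hsigN.hasSum.sigma hfib⟩
  have hconj1 : Summable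
      (fun n : ℕ => ‖hahnPhi q σ x n * cauchyP q u v n * t ^ n / qPoch q q n‖) := by
    refine Summable.of_nonneg_of_le (fun n => norm_nonneg _) (fun n => ?_) hsumInner
    rw [hterm n]
    exact norm_sum_le _ _
  refine ⟨hconj1, ?_⟩
  -- evaluation of the sum
  have hsigF : Summable (fun y : Σ n : ℕ, Finset.HasAntidiagonal.antidiagonal n => F y.2) := by
    have := (Finset.HasAntidiagonal.sigmaAntidiagonalEquivProd (A := ℕ)).summable_iff.mpr hFsum
    exact this
  have hwvt : ∀ j : ℕ, 1 - v * t * q ^ j ≠ 0 := by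
    intro j h
    exact hvt j (by linear_combination -h)
  have hpkne : ∀ k : ℕ, qPoch q (v * t) k ≠ 0 := by
    intro k
    rw [qPoch]
    exact Finset.prod_ne_zero_iff.mpr fun j _ => hwvt j
  have hutinf : qPochInf q (u * t) ≠ 0 := S10.qPochInf_ne_zero hq1 _ hut
  have hinner : ∀ k : ℕ, ∑' m, F (k, m)
      = cA k * (qPochInf q (v * t) / qPoch q (v * t) k / qPochInf q (u * t)) := by
    intro k
    have hneq : ∀ j : ℕ, 1 - q ^ k * (v / u) * (u * t) * q ^ j ≠ 0 := by
      intro j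
      have harg : q ^ k * (v / u) * (u * t) = v * t * q ^ k := by
        field_simp
      rw [harg]
      intro h
      refine hvt (k + j) ?_
      rw [pow_add]
      linear_combination -h
    have hqb := S10.qbinom hq1 (q ^ k * (v / u)) (u * t) hut hneq
    have harg2 : q ^ k * (v / u) * (u * t) = q ^ k * (v * t) := by
      field_simp
    rw [harg2] at hqb
    have hshift := S10.qPochInf_shift hq1 (v * t) k hwvt
    have hval : qPochInf q (q ^ k * (v * t)) = qPochInf q (v * t) / qPoch q (v * t) k := by
      rw [eq_div_iff (hpkne k)]
      linear_combination hshift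
    rw [hval] at hqb
    calc ∑' m, F (k, m) = ∑' m, cA k * cB k m := by rw [hFdef]
      _ = cA k * ∑' m, cB k m := tsum_mul_left
      _ = cA k * (qPochInf q (v * t) / qPoch q (v * t) k / qPochInf q (u * t)) := by
          rw [hcB]
          rw [hqb.tsum_eq]
  calc ∑' n : ℕ, hahnPhi q σ x n * cauchyP q u v n * t ^ n / qPoch q q n
      = ∑' n : ℕ, ∑ kl ∈ Finset.HasAntidiagonal.antidiagonal n, F kl := tsum_congr hterm
    _ = ∑' n : ℕ, ∑' kl : Finset.HasAntidiagonal.antidiagonal n, F kl := by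
        refine tsum_congr fun n => ?_
        rw [Finset.tsum_subtype]
    _ = ∑' y : Σ n : ℕ, Finset.HasAntidiagonal.antidiagonal n, F y.2 := (Summable.tsum_sigma hsigF).symm
    _ = ∑' p : ℕ × ℕ, F p := (Finset.HasAntidiagonal.sigmaAntidiagonalEquivProd (A := ℕ)).tsum_eq F
    _ = ∑' k : ℕ, ∑' m : ℕ, F (k, m) := Summable.tsum_prod' hFsum hFsum.prod_factor
    _ = ∑' k : ℕ, cA k * (qPochInf q (v * t) / qPoch q (v * t) k / qPochInf q (u * t)) :=
        tsum_congr hinner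
    _ = qPochInf q (v * t) / qPochInf q (u * t) * Phi21 q (v / u) σ (v * t) (u * x * t) := by
        rw [Phi21, ← tsum_mul_left]
        refine tsum_congr fun k => ?_
        rw [hcA]
        simp only
        rw [hcau k]
        have h1 := hqq_ne k
        have h2 := hpkne k
        field_simp
        ring

end
end

section
/- Let x, y, t ∈ ℂ and k ∈ ℕ. Assume x t q^m ≠ 1 for all integers m ≥ 0, and q^i x ≠ q^{−j−1} y for all integers i, j ≥ 0 with i + j ≤ k − 1 (so all denominators arising in the k iterations are nonzero). Then D_{xy}^k{ (yt;q)_∞/(xt;q)_∞ } = t^k · (yt;q)_∞/(xt;q)_∞. -/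
noncomputable section

private lemma log_summable' {q : ℂ} (hq1 : ‖q‖ < 1) (a : ℂ) :
    Summable (fun j : ℕ => Complex.log (1 - a * q ^ j)) := by
  have h0 : Filter.Tendsto (fun j : ℕ => ‖a‖ * ‖q‖ ^ j) Filter.atTop (nhds 0) := by
    simpa using (tendsto_pow_atTop_nhds_zero_of_lt_one (norm_nonneg q) hq1).const_mul ‖a‖
  have hev : ∀ᶠ j in Filter.atTop, ‖Complex.log (1 - a * q ^ j)‖ ≤ (3/2) * (‖a‖ * ‖q‖ ^ j) := by
    filter_upwards [h0.eventually_le_const (by norm_num : (0:ℝ) < 1/2)] with j hj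
    have hn : ‖-(a * q ^ j)‖ ≤ 1/2 := by
      rw [norm_neg, norm_mul, norm_pow]; exact hj
    have := Complex.norm_log_one_add_half_le_self hn
    rw [show (1 : ℂ) + -(a * q ^ j) = 1 - a * q ^ j by ring] at this
    simpa [norm_mul, norm_pow] using this
  refine Summable.of_norm_bounded_eventually_nat ?_ hev
  exact (((summable_geometric_of_lt_one (norm_nonneg q) hq1).mul_left ‖a‖).mul_left (3/2))

private lemma qPochInf_multipliable {q : ℂ} (hq1 : ‖q‖ < 1) (a : ℂ)
    (h : ∀ j : ℕ, 1 - a * q ^ j ≠ 0) :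
    Multipliable (fun j : ℕ => 1 - a * q ^ j) :=
  Complex.multipliable_of_summable_log (log_summable' hq1 a)

private lemma qPochInf_ne_zero {q : ℂ} (hq1 : ‖q‖ < 1) (a : ℂ)
    (h : ∀ j : ℕ, 1 - a * q ^ j ≠ 0) : qPochInf q a ≠ 0 := by
  have := Complex.cexp_tsum_eq_tprod (f := fun j : ℕ => 1 - a * q ^ j) h (log_summable' hq1 a)
  rw [qPochInf, ← this]
  exact Complex.exp_ne_zero _

private lemma qPochInf_eq_zero {q : ℂ} (a : ℂ) (j0 : ℕ) (h : 1 - a * q ^ j0 = 0) :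
    qPochInf q a = 0 := by
  have h0 : HasProd (fun j : ℕ => 1 - a * q ^ j) 0 := by
    rw [HasProd]
    refine tendsto_const_nhds.congr' ?_
    filter_upwards [Filter.eventually_ge_atTop ({j0} : Finset ℕ)] with s hs
    exact (Finset.prod_eq_zero (hs (Finset.mem_singleton_self j0)) h).symm
  exact h0.tprod_eq

private lemma qPochInf_shift {q : ℂ} (hq1 : ‖q‖ < 1) (a : ℂ) :
    qPochInf q a = (1 - a) * qPochInf q (q * a) := by
  have key : ∀ j : ℕ, 1 - (q * a) * q ^ j = 1 - a * q ^ (j + 1) := by intro j; ring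
  by_cases h : ∀ j : ℕ, 1 - (q * a) * q ^ j ≠ 0
  · have hm : Multipliable (fun j : ℕ => 1 - a * q ^ (j + 1)) :=
      (qPochInf_multipliable hq1 (q * a) h).congr key
    have := tprod_eq_zero_mul' (f := fun n : ℕ => 1 - a * q ^ n) hm
    simp only [pow_zero, mul_one] at this
    rw [qPochInf, this, qPochInf]
    congr 1
    exact tprod_congr fun j => (key j).symm
  · push_neg at h
    obtain ⟨j, hj⟩ := h
    have h1 : qPochInf q a = 0 := qPochInf_eq_zero a (j + 1) (by rw [← key j]; exact hj)
    have h2 : qPochInf q (q * a) = 0 := qPochInf_eq_zero (q * a) j hj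
    rw [h1, h2, mul_zero]

private lemma dxy_step {q : ℂ} (hq0 : q ≠ 0) (hq1 : ‖q‖ < 1) (t x y : ℂ)
    (hx : ∀ m : ℕ, 1 - x * t * q ^ m ≠ 0) (hxy : x - y / q ≠ 0) :
    Dxy q (fun u w => qPochInf q (w * t) / qPochInf q (u * t)) x y
      = t * (qPochInf q (y * t) / qPochInf q (x * t)) := by
  have hP : qPochInf q (q * (x * t)) ≠ 0 := by
    refine qPochInf_ne_zero hq1 _ (fun j => ?_)
    have := hx (j + 1)
    rw [show (1 : ℂ) - q * (x * t) * q ^ j = 1 - x * t * q ^ (j + 1) by ring]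
    exact this
  have hD : qPochInf q (x * t) = (1 - x * t) * qPochInf q (q * (x * t)) :=
    qPochInf_shift hq1 _
  have hE : qPochInf q ((y / q) * t) = (1 - y * t / q) * qPochInf q (y * t) := by
    have h := qPochInf_shift hq1 (y * t / q)
    rw [show q * (y * t / q) = y * t by field_simp] at h
    rw [show (y / q) * t = y * t / q by ring]
    exact h
  have h1 : (1 : ℂ) - x * t ≠ 0 := by simpa using hx 0
  rw [Dxy]
  rw [hE, hD, show (q * x) * t = q * (x * t) by ring]
  rw [div_eq_iff hxy]
  have h1' : (1 : ℂ) - t * x ≠ 0 := by rw [mul_comm]; exact h1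
  field_simp
  ring

/-- Action of the iterated homogeneous q-difference operator on
`(yt;q)_∞/(xt;q)_∞`. -/
theorem stmt11 (q : ℂ) (hq0 : q ≠ 0) (hq1 : ‖q‖ < 1) (x y t : ℂ) (k : ℕ)
    (hxt : ∀ m : ℕ, x * t * q ^ m ≠ 1)
    (hden : ∀ i j : ℕ, i + j + 1 ≤ k → q ^ i * x ≠ q ^ (-(j : ℤ) - 1) * y) :
    ((Dxy q)^[k] (fun u w => qPochInf q (w * t) / qPochInf q (u * t))) x y =
      t ^ k * (qPochInf q (y * t) / qPochInf q (x * t)) := by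
  induction k generalizing x y with
  | zero => simp
  | succ k ih =>
    have hxy : x - y / q ≠ 0 := by
      have h := hden 0 0 (by omega)
      simp only [pow_zero, one_mul] at h
      intro hcon
      apply h
      have hx : x = y / q := by linear_combination hcon
      rw [hx]
      rw [show (-((0:ℕ):ℤ) - 1) = -1 by simp, zpow_neg_one]
      field_simp
    rw [Function.iterate_succ_apply', Dxy]
    have ih1 : ((Dxy q)^[k] (fun u w => qPochInf q (w * t) / qPochInf q (u * t))) x (y / q)
        = t ^ k * (qPochInf q ((y / q) * t) / qPochInf q (x * t)) := by
      refine ih x (y / q) hxt (fun i j hij => ?_)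
      have h := hden i (j + 1) (by omega)
      intro hcon
      apply h
      rw [show (-(((j:ℕ)+1:ℕ):ℤ) - 1) = (-(j:ℤ) - 1) + (-1) by push_cast; ring,
        zpow_add₀ hq0, zpow_neg_one]
      rw [hcon]
      field_simp
    have ih2 : ((Dxy q)^[k] (fun u w => qPochInf q (w * t) / qPochInf q (u * t))) (q * x) y
        = t ^ k * (qPochInf q (y * t) / qPochInf q ((q * x) * t)) := by
      refine ih (q * x) y (fun m => ?_) (fun i j hij => ?_)
      · rw [show q * x * t * q ^ m = x * t * q ^ (m + 1) by ring]; exact hxt (m + 1)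
      · rw [show q ^ i * (q * x) = q ^ (i + 1) * x by ring]
        exact hden (i + 1) j (by omega)
    rw [ih1, ih2]
    have hstep := dxy_step hq0 hq1 t x y (fun m => sub_ne_zero_of_ne (fun hc => hxt m hc.symm)) hxy
    rw [Dxy] at hstep
    calc (t ^ k * (qPochInf q (y / q * t) / qPochInf q (x * t)) -
          t ^ k * (qPochInf q (y * t) / qPochInf q (q * x * t))) / (x - y / q)
        = t ^ k * ((qPochInf q (y / q * t) / qPochInf q (x * t) -
            qPochInf q (y * t) / qPochInf q (q * x * t)) / (x - y / q)) := by
          rw [← mul_sub, mul_div_assoc]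
      _ = t ^ k * (t * (qPochInf q (y * t) / qPochInf q (x * t))) := by rw [hstep]
      _ = t ^ (k + 1) * (qPochInf q (y * t) / qPochInf q (x * t)) := by ring

end
end

section
/- Let x, y ∈ ℂ, n ∈ ℕ and 0 ≤ k ≤ n. Assume q^i x ≠ q^{−j−1} y for all integers i, j ≥ 0 with i + j ≤ k − 1 (so all denominators arising in the k iterations are nonzero). Then D_{xy}^k{ p_n(x,y) } = ((q;q)_n/(q;q)_{n−k}) · p_{n−k}(x,y). -/
noncomputable section

lemma qPoch_ne_zero (q : ℂ) (hq1 : ‖q‖ < 1) (n : ℕ) : qPoch q q n ≠ 0 := by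
  unfold qPoch
  apply Finset.prod_ne_zero_iff.2
  intro j _
  have h : ‖q * q ^ j‖ < 1 := by
    rw [← pow_succ', norm_pow]
    exact pow_lt_one₀ (norm_nonneg q) hq1 (Nat.succ_ne_zero j)
  intro h0
  have : q * q ^ j = 1 := by linear_combination -h0
  rw [this] at h; simp at h

lemma one_sub_pow_ne (q : ℂ) (hq1 : ‖q‖ < 1) (m : ℕ) (hm : m ≠ 0) : (1 : ℂ) - q ^ m ≠ 0 := by
  have h : ‖q ^ m‖ < 1 := by
    rw [norm_pow]; exact pow_lt_one₀ (norm_nonneg q) hq1 hm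
  intro h0
  have : q ^ m = 1 := by linear_combination -h0
  rw [this] at h; simp at h

lemma cauchy_shift (q x y : ℂ) (hq0 : q ≠ 0) (m : ℕ) :
    cauchyP q (q * x) y m = q ^ m * cauchyP q x (y / q) m := by
  unfold cauchyP
  rw [show (q:ℂ)^m = ∏ _j ∈ Finset.range m, q by simp, ← Finset.prod_mul_distrib]
  apply Finset.prod_congr rfl
  intro j _
  field_simp

lemma cauchy_split (q x y : ℂ) (hq0 : q ≠ 0) (m : ℕ) :
    cauchyP q x (y / q) (m + 1) = (x - y / q) * cauchyP q x y m := by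
  unfold cauchyP
  rw [Finset.prod_range_succ', mul_comm]
  congr 1
  · simp
  · apply Finset.prod_congr rfl
    intro j _
    rw [pow_succ']
    field_simp

lemma step (q : ℂ) (hq0 : q ≠ 0) (x y : ℂ) (hd : x - y / q ≠ 0) (m : ℕ) :
    Dxy q (fun u w => cauchyP q u w m) x y = (1 - q ^ m) * cauchyP q x y (m - 1) := by
  unfold Dxy
  simp only
  rw [cauchy_shift q x y hq0 m]
  rcases m with _ | m'
  · simp
  · rw [cauchy_split q x y hq0 m',
      show (x - y / q) * cauchyP q x y m' - q ^ (m' + 1) * ((x - y / q) * cauchyP q x y m') =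
        (x - y / q) * ((1 - q ^ (m' + 1)) * cauchyP q x y m') by ring,
      mul_div_cancel_left₀ _ hd]
    simp

theorem stmt12' (q : ℂ) (hq0 : q ≠ 0) (hq1 : ‖q‖ < 1) (n k : ℕ) (hk : k ≤ n) :
    ∀ x y : ℂ, (∀ i j : ℕ, i + j + 1 ≤ k → q ^ i * x ≠ q ^ (-(j : ℤ) - 1) * y) →
    ((Dxy q)^[k] (fun u w => cauchyP q u w n)) x y =
      qPoch q q n / qPoch q q (n - k) * cauchyP q x y (n - k) := by
  induction k with
  | zero =>
    intro x y _
    simp [div_self (qPoch_ne_zero q hq1 n)]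
  | succ k ih =>
    intro x y hden
    rw [Function.iterate_succ_apply']
    have hd : x - y / q ≠ 0 := by
      have h := hden 0 0 (by omega)
      simp only [pow_zero, one_mul, Nat.cast_zero, neg_zero, zero_sub, zpow_neg_one] at h
      intro h0
      apply h
      rw [sub_eq_zero] at h0
      rw [h0, div_eq_inv_mul]
    have hden1 : ∀ i j : ℕ, i + j + 1 ≤ k → q ^ i * x ≠ q ^ (-(j : ℤ) - 1) * (y / q) := by
      intro i j hij h0
      apply hden i (j + 1) (by omega)
      push_cast
      rw [show (-(↑j + 1 : ℤ) - 1) = (-(j:ℤ) - 1) + (-1) by ring, zpow_add₀ hq0, zpow_neg_one]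
      field_simp at h0 ⊢
      linear_combination h0
    have hden2 : ∀ i j : ℕ, i + j + 1 ≤ k → q ^ i * (q * x) ≠ q ^ (-(j : ℤ) - 1) * y := by
      intro i j hij h0
      apply hden (i + 1) j (by omega)
      rw [pow_succ']
      rw [show q ^ i * (q * x) = q * q ^ i * x by ring] at h0
      exact h0
    have h1 := ih (by omega) x (y / q) hden1
    have h2 := ih (by omega) (q * x) y hden2
    have hDxy : Dxy q ((Dxy q)^[k] (fun u w => cauchyP q u w n)) x y =
        (((Dxy q)^[k] (fun u w => cauchyP q u w n)) x (y / q) -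
          ((Dxy q)^[k] (fun u w => cauchyP q u w n)) (q * x) y) / (x - y / q) := rfl
    have hnk : n - k = (n - (k+1)) + 1 := by omega
    have hpoch : qPoch q q ((n - (k+1)) + 1) =
        qPoch q q (n - (k+1)) * (1 - q ^ ((n - (k+1)) + 1)) := by
      unfold qPoch
      rw [Finset.prod_range_succ]
      congr 2
      rw [pow_succ']
    rw [hDxy, h1, h2, cauchy_shift q x y hq0 (n - k), hnk,
      cauchy_split q x y hq0 (n - (k+1)), hpoch, div_eq_iff hd]
    have h3 := one_sub_pow_ne q hq1 ((n - (k+1)) + 1) (Nat.succ_ne_zero _)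
    have h4 := qPoch_ne_zero q hq1 (n - (k+1))
    field_simp

/-- Action of the iterated homogeneous q-difference operator on the
Cauchy polynomials. -/
theorem stmt12 (q : ℂ) (hq0 : q ≠ 0) (hq1 : ‖q‖ < 1) (x y : ℂ) (n k : ℕ) (hk : k ≤ n)
    (hden : ∀ i j : ℕ, i + j + 1 ≤ k → q ^ i * x ≠ q ^ (-(j : ℤ) - 1) * y) :
    ((Dxy q)^[k] (fun u w => cauchyP q u w n)) x y =
      qPoch q q n / qPoch q q (n - k) * cauchyP q x y (n - k) := by
  exact stmt12' q hq0 hq1 n k hk x y hden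

end
end
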